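/- arXiv:2006.02184 — 5 statements merged into one kernel-verified Lean document; each statement's English description precedes it below -/
import Mathlib

section
/- Suppose the number n of teams satisfies n ≡ 1 (mod 3) and n ≥ 4. Then a simple schedule with exactly one room of size 4 and (n−4)/3 rooms of size 3 exists if and only if every problem p ∈ P is avoided by at least one team. -/
section Aux
open Finset


/-- Double counting: sum over problems in `X` of how many teams in `X'` contain it equals
the sum of set sizes, provided all sets are inside `X`. -/
lemma doublecount {ι α : Type*} [DecidableEq α] (A : ι → Finset α)
    (X : Finset α) (X' : Finset ι) (h : ∀ t ∈ X', A t ⊆ X) :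
    ∑ p ∈ X, (X'.filter (fun t => p ∈ A t)).card = ∑ t ∈ X', (A t).card := by
  simp only [Finset.card_filter]
  rw [Finset.sum_comm]
  refine Finset.sum_congr rfl fun t ht => ?_
  rw [← Finset.card_filter]
  congr 1
  rw [Finset.filter_mem_eq_inter, Finset.inter_eq_right]
  exact h t ht

/-- Key matching lemma: if all sets have size `k` and each element lies in at most `k`
sets, then there is a system of distinct representatives which moreover covers every
element lying in exactly `k` sets. -/
lemma lemA {ι α : Type*} [Fintype ι] [DecidableEq ι] [DecidableEq α] (k : ℕ) (hk : 0 < k)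
    (A : ι → Finset α) (hcard : ∀ t, (A t).card = k)
    (hmult : ∀ p : α, (univ.filter (fun t => p ∈ A t)).card ≤ k) :
    ∃ f : ι → α, Function.Injective f ∧ (∀ t, f t ∈ A t) ∧
      ∀ p, (univ.filter (fun t => p ∈ A t)).card = k → ∃ t, f t = p := by
  classical
  set U : Finset α := univ.biUnion A with hU
  have hAsub : ∀ t : ι, A t ⊆ U := fun t => subset_biUnion_of_mem A (mem_univ t)
  set mult : α → ℕ := fun p => (univ.filter (fun t => p ∈ A t)).card with hmultdef
  have hsum : ∑ p ∈ U, mult p = k * Fintype.card ι := by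
    have := doublecount A U univ (fun t _ => hAsub t)
    simp only [hcard] at this
    rw [hmultdef]
    simpa [Finset.sum_const, mul_comm] using this
  have hUcard : Fintype.card ι ≤ U.card := by
    have h1 : ∑ p ∈ U, mult p ≤ ∑ p ∈ U, k := Finset.sum_le_sum (fun p _ => hmult p)
    rw [hsum, Finset.sum_const, smul_eq_mul] at h1
    exact le_of_mul_le_mul_left (by linarith [mul_comm U.card k]) hk
  set m : ℕ := U.card - Fintype.card ι with hm
  have hmdef : U.card = m + Fintype.card ι := by omega
  -- total deficiency
  have hdef : ∑ p ∈ U, (k - mult p) = k * m := by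
    have h1 : ∑ p ∈ U, ((k - mult p) + mult p) = ∑ p ∈ U, k := by
      refine Finset.sum_congr rfl fun p _ => ?_
      have h' : mult p ≤ k := hmult p
      omega
    rw [Finset.sum_add_distrib, hsum, Finset.sum_const, smul_eq_mul] at h1
    have h2 : U.card * k = (m + Fintype.card ι) * k := by rw [← hmdef]
    rw [h2, Nat.add_mul] at h1
    have := mul_comm k m
    have := mul_comm k (Fintype.card ι)
    omega
  set Udef : Finset α := U.filter (fun p => mult p < k) with hUdef
  set S : ι ⊕ Fin m → Finset α := Sum.elim A (fun _ => Udef) with hS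
  have hSsub : ∀ x, S x ⊆ U := by
    intro x
    cases x with
    | inl t => exact hAsub t
    | inr i => exact Finset.filter_subset _ _
  -- Hall's condition
  have hall : ∀ s : Finset (ι ⊕ Fin m), s.card ≤ (s.biUnion S).card := by
    intro s
    set N := s.biUnion S with hN
    have hNU : N ⊆ U := Finset.biUnion_subset.mpr (fun x _ => hSsub x)
    have hTN : ∀ t ∈ s.toLeft, A t ⊆ N := by
      intro t ht
      have : Sum.inl t ∈ s := Finset.mem_toLeft.mp ht
      exact Finset.subset_biUnion_of_mem S this
    have hcount : k * s.toLeft.card ≤ ∑ p ∈ N, (s.toLeft.filter (fun t => p ∈ A t)).card := by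
      rw [doublecount A N s.toLeft hTN]
      simp only [hcard]
      rw [Finset.sum_const, smul_eq_mul, mul_comm]
    have hmsT : ∀ p, (s.toLeft.filter (fun t => p ∈ A t)).card ≤ mult p := by
      intro p
      exact Finset.card_le_card (Finset.filter_subset_filter _ (Finset.subset_univ _))
    have hcards : s.toLeft.card + s.toRight.card = s.card := Finset.card_toLeft_add_card_toRight
    rcases Finset.eq_empty_or_nonempty s.toRight with he | hne
    · -- no dummies
      have h1 : k * s.toLeft.card ≤ ∑ p ∈ N, mult p :=
        le_trans hcount (Finset.sum_le_sum fun p _ => hmsT p)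
      have h2 : ∑ p ∈ N, mult p ≤ ∑ p ∈ N, k := Finset.sum_le_sum fun p _ => hmult p
      rw [Finset.sum_const, smul_eq_mul] at h2
      have h3 : k * s.toLeft.card ≤ N.card * k := le_trans h1 h2
      have hsc : s.card = s.toLeft.card := by
        rw [he] at hcards; simpa using hcards.symm
      rw [hsc]
      nlinarith
    · -- some dummy present, so Udef ⊆ N
      obtain ⟨i, hi⟩ := hne
      have hUdefN : Udef ⊆ N := by
        have : Sum.inr i ∈ s := Finset.mem_toRight.mp hi
        exact Finset.subset_biUnion_of_mem S this
      have hDm : s.toRight.card ≤ m := by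
        simpa using Finset.card_le_card (Finset.subset_univ s.toRight)
      have key : ∑ p ∈ N, ((s.toLeft.filter (fun t => p ∈ A t)).card + (k - mult p)) ≤ ∑ p ∈ N, k := by
        refine Finset.sum_le_sum fun p _ => ?_
        have h1 : (s.toLeft.filter (fun t => p ∈ A t)).card ≤ mult p := hmsT p
        have h2 : mult p ≤ k := hmult p
        omega
      have hsplit : ∑ p ∈ N, ((s.toLeft.filter (fun t => p ∈ A t)).card + (k - mult p))
          = ∑ p ∈ N, (s.toLeft.filter (fun t => p ∈ A t)).card + ∑ p ∈ N, (k - mult p) :=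
        Finset.sum_add_distrib
      have hdefN : k * m ≤ ∑ p ∈ N, (k - mult p) := by
        have h1 : ∑ p ∈ Udef, (k - mult p) ≤ ∑ p ∈ N, (k - mult p) :=
          Finset.sum_le_sum_of_subset hUdefN
        have h2 : ∑ p ∈ Udef, (k - mult p) = ∑ p ∈ U, (k - mult p) := by
          rw [hUdef]
          exact Finset.sum_filter_of_ne (fun p hp h => by omega)
        omega
      have hNk : ∑ p ∈ N, k = N.card * k := by rw [Finset.sum_const, smul_eq_mul]
      have : k * s.toLeft.card + k * m ≤ N.card * k := by
        calc k * s.toLeft.card + k * m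
            ≤ ∑ p ∈ N, (s.toLeft.filter (fun t => p ∈ A t)).card + ∑ p ∈ N, (k - mult p) := by
              exact Nat.add_le_add hcount hdefN
          _ = ∑ p ∈ N, ((s.toLeft.filter (fun t => p ∈ A t)).card + (k - mult p)) := hsplit.symm
          _ ≤ ∑ p ∈ N, k := key
          _ = N.card * k := hNk
      have hsc : s.card ≤ s.toLeft.card + m := by omega
      nlinarith
  obtain ⟨F, hFinj, hFmem⟩ := (Finset.all_card_le_biUnion_card_iff_exists_injective S).mp hall
  have himage : univ.image F = U := by
    apply Finset.eq_of_subset_of_card_le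
    · intro p hp
      obtain ⟨x, _, rfl⟩ := Finset.mem_image.mp hp
      exact hSsub x (hFmem x)
    · rw [Finset.card_image_of_injective _ hFinj]
      simp only [Finset.card_univ, Fintype.card_sum, Fintype.card_fin, hmdef]
      omega
  refine ⟨F ∘ Sum.inl, hFinj.comp Sum.inl_injective, fun t => hFmem (Sum.inl t), ?_⟩
  intro p hp
  have hpU : p ∈ U := by
    have h1 : (univ.filter (fun t => p ∈ A t)).Nonempty := by
      rw [← Finset.card_pos, hp]; exact hk
    obtain ⟨t, ht⟩ := h1
    exact hAsub t (Finset.mem_filter.mp ht).2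
  have : p ∈ univ.image F := himage ▸ hpU
  obtain ⟨x, _, hx⟩ := Finset.mem_image.mp this
  cases x with
  | inl t => exact ⟨t, hx⟩
  | inr i =>
      exfalso
      have : p ∈ Udef := by rw [← hx]; exact hFmem (Sum.inr i)
      rw [hUdef] at this
      have h2 : mult p < k := (Finset.mem_filter.mp this).2
      have h3 : mult p = k := hp
      omega

/-- One reduction step: from sets of size `k+1` with multiplicity `≤ k+1`, pick an SDR
covering the full-multiplicity elements; erasing it yields sets of size `k`,
multiplicity `≤ k`. -/
lemma step {ι α : Type*} [Fintype ι] [DecidableEq ι] [DecidableEq α] (k : ℕ)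
    (A : ι → Finset α) (hcard : ∀ t, (A t).card = k + 1)
    (hmult : ∀ p : α, (univ.filter (fun t => p ∈ A t)).card ≤ k + 1) :
    ∃ f : ι → α, Function.Injective f ∧ (∀ t, f t ∈ A t) ∧
      (∀ t, ((A t).erase (f t)).card = k) ∧
      (∀ p : α, (univ.filter (fun t => p ∈ (A t).erase (f t))).card ≤ k) := by
  classical
  obtain ⟨f, hinj, hmem, hcov⟩ := lemA (k + 1) (Nat.succ_pos k) A hcard hmult
  refine ⟨f, hinj, hmem, fun t => by rw [Finset.card_erase_of_mem (hmem t), hcard]; omega, ?_⟩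
  intro p
  have hsub : univ.filter (fun t => p ∈ (A t).erase (f t)) ⊆ univ.filter (fun t => p ∈ A t) := by
    apply Finset.monotone_filter_right
    intro t ht
    intro h; exact Finset.mem_of_mem_erase h
  by_cases hc : (univ.filter (fun t => p ∈ A t)).card = k + 1
  · obtain ⟨t0, ht0⟩ := hcov p hc
    have hsub2 : univ.filter (fun t => p ∈ (A t).erase (f t))
        ⊆ (univ.filter (fun t => p ∈ A t)).erase t0 := by
      intro t ht
      simp only [Finset.mem_filter, Finset.mem_univ, true_and] at ht
      rw [Finset.mem_erase]
      constructor
      · rintro rfl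
        rw [← ht0] at ht
        exact Finset.notMem_erase _ _ ht
      · simp only [Finset.mem_filter, Finset.mem_univ, true_and]
        exact Finset.mem_of_mem_erase ht
    have h1 := Finset.card_le_card hsub2
    rw [Finset.card_erase_of_mem, hc] at h1
    · omega
    · simp only [Finset.mem_filter, Finset.mem_univ, true_and]
      rw [← ht0]
      exact hmem t0
  · have h1 := hmult p
    have h2 := Finset.card_le_card hsub
    omega

lemma coloring {ι α : Type*} [Fintype ι] [DecidableEq ι] [DecidableEq α]
    (A : ι → Finset α) (h3 : ∀ t, (A t).card = 3)
    (hm : ∀ p : α, (univ.filter (fun t => p ∈ A t)).card ≤ 3) :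
    ∃ π : Fin 3 → ι → α, (∀ t, ({π 0 t, π 1 t, π 2 t} : Finset α) = A t) ∧
      ∀ (j : Fin 3) (t t' : ι), t ≠ t' → π j t ≠ π j t' := by
  classical
  obtain ⟨f0, hf0inj, hf0mem, hA1card, hA1mult⟩ := step 2 A h3 hm
  set A1 : ι → Finset α := fun t => (A t).erase (f0 t) with hA1
  obtain ⟨f1, hf1inj, hf1mem, hA2card, hA2mult⟩ := step 1 A1 hA1card hA1mult
  set A2 : ι → Finset α := fun t => (A1 t).erase (f1 t) with hA2
  have hone : ∀ t, ∃ x, A2 t = {x} := fun t => Finset.card_eq_one.mp (hA2card t)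
  choose f2 hf2 using hone
  have hf2mem : ∀ t, f2 t ∈ A2 t := fun t => by rw [hf2 t]; exact Finset.mem_singleton_self _
  have hf2inj : Function.Injective f2 := by
    intro t t' h
    by_contra hne
    have h1 : ({t, t'} : Finset ι) ⊆ univ.filter (fun s => f2 t ∈ (A1 s).erase (f1 s)) := by
      intro x hx
      simp only [Finset.mem_insert, Finset.mem_singleton] at hx
      rcases hx with rfl | rfl
      · simp only [Finset.mem_filter, Finset.mem_univ, true_and]; exact hf2mem x
      · simp only [Finset.mem_filter, Finset.mem_univ, true_and]; rw [h]; exact hf2mem x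
    have h2 := Finset.card_le_card h1
    rw [Finset.card_pair hne] at h2
    have h3 := hA2mult (f2 t)
    omega
  -- memberships and distinctness within a team
  have hf1A : ∀ t, f1 t ∈ A t := fun t => Finset.mem_of_mem_erase (hf1mem t)
  have hf1ne0 : ∀ t, f1 t ≠ f0 t := fun t => Finset.ne_of_mem_erase (hf1mem t)
  have hf2A1 : ∀ t, f2 t ∈ A1 t := fun t => Finset.mem_of_mem_erase (hf2mem t)
  have hf2A : ∀ t, f2 t ∈ A t := fun t => Finset.mem_of_mem_erase (hf2A1 t)
  have hf2ne1 : ∀ t, f2 t ≠ f1 t := fun t => Finset.ne_of_mem_erase (hf2mem t)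
  have hf2ne0 : ∀ t, f2 t ≠ f0 t := fun t => Finset.ne_of_mem_erase (hf2A1 t)
  refine ⟨![f0, f1, f2], ?_, ?_⟩
  · intro t
    have hsub : ({f0 t, f1 t, f2 t} : Finset α) ⊆ A t := by
      intro x hx
      simp only [Finset.mem_insert, Finset.mem_singleton] at hx
      rcases hx with rfl | rfl | rfl
      · exact hf0mem t
      · exact hf1A t
      · exact hf2A t
    have hcard3 : ({f0 t, f1 t, f2 t} : Finset α).card = 3 := by
      rw [Finset.card_insert_of_notMem, Finset.card_insert_of_notMem, Finset.card_singleton]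
      · simp only [Finset.mem_singleton]
        exact fun h => hf2ne1 t h.symm
      · simp only [Finset.mem_insert, Finset.mem_singleton]
        push_neg
        exact ⟨fun h => hf1ne0 t h.symm, fun h => hf2ne0 t h.symm⟩
    have := Finset.eq_of_subset_of_card_le hsub (by rw [hcard3, h3])
    simpa using this.symm ▸ rfl
  · intro j t t' hne
    fin_cases j
    · simpa using fun h => hne (hf0inj h)
    · simpa using fun h => hne (hf1inj h)
    · simpa using fun h => hne (hf2inj h)

end Aux

section Main
open Finset

/-- Suppose the number `n` of teams satisfies `n ≡ 1 (mod 3)` and `n ≥ 4`. Then a simple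
schedule with exactly one room of size 4 and `(n-4)/3` rooms of size 3 exists if and only
if every problem is avoided by at least one team. -/
theorem simple_schedule_iff_avoided_of_mod_three_eq_one
    {T P : Type*} [Fintype T] [DecidableEq T] [DecidableEq P]
    (Pf : T → Finset P) (hPf : ∀ t, (Pf t).card = 3)
    (hmod : Fintype.card T % 3 = 1) (hn : 4 ≤ Fintype.card T) :
    (∃ (room : T → Fin ((Fintype.card T - 4) / 3 + 1)) (π : Fin 3 → T → P),
      ((Finset.univ.filter (fun t => room t = 0)).card = 4) ∧
      (∀ r, r ≠ 0 → (Finset.univ.filter (fun t => room t = r)).card = 3) ∧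
      (∀ t, ({π 0 t, π 1 t, π 2 t} : Finset P) = Pf t) ∧
      (∀ (j : Fin 3) (t t' : T), t ≠ t' → room t = room t' → π j t ≠ π j t'))
    ↔ (∀ p : P, ∃ t : T, p ∉ Pf t) := by
  classical
  constructor
  · -- forward direction: pigeonhole in the room of size 4
    rintro ⟨room, π, h4, _h3, hset, hinj⟩ p
    by_contra hc
    push_neg at hc
    have hex : ∀ t : T, ∃ j : Fin 3, π j t = p := by
      intro t
      have hpt := hc t
      rw [← hset t] at hpt
      simp only [Finset.mem_insert, Finset.mem_singleton] at hpt
      rcases hpt with h | h | h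
      exacts [⟨0, h.symm⟩, ⟨1, h.symm⟩, ⟨2, h.symm⟩]
    choose g hg using hex
    have hlt : (univ : Finset (Fin 3)).card < (univ.filter (fun t => room t = 0)).card := by
      rw [h4]; simp
    obtain ⟨t, ht, t', ht', hne, heq⟩ :=
      Finset.exists_ne_map_eq_of_card_lt_of_maps_to hlt (fun t _ => Finset.mem_univ (g t))
    have hr : room t = room t' := by
      rw [(Finset.mem_filter.mp ht).2, (Finset.mem_filter.mp ht').2]
    refine hinj (g t) t t' hne hr ?_
    rw [hg t, heq, hg t']
  · -- reverse: construct the schedule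
    intro havoid
    set m : ℕ := (Fintype.card T - 4) / 3 with hm
    have hnm : Fintype.card T = 3 * m + 4 := by omega
    -- choose a team t1 and avoiders of its problems
    have hT : Nonempty T := by
      rw [← Fintype.card_pos_iff]; omega
    obtain ⟨t1⟩ := hT
    choose u hu using havoid
    -- a 4-set Q with no problem common to all its members
    have hQ0card : (insert t1 ((Pf t1).image u)).card ≤ 4 := by
      refine le_trans (Finset.card_insert_le _ _) ?_
      have := Finset.card_image_le (s := Pf t1) (f := u)
      rw [hPf t1] at this
      omega
    obtain ⟨Q, hQ0Q, hQcard⟩ := Finset.exists_superset_card_eq hQ0card hn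
    have hQmult : ∀ p : P, (Q.filter (fun t => p ∈ Pf t)).card ≤ 3 := by
      intro p
      have hex0 : ∃ t0 ∈ Q, p ∉ Pf t0 := by
        by_cases hp : p ∈ Pf t1
        · exact ⟨u p, hQ0Q (Finset.mem_insert_of_mem (Finset.mem_image_of_mem u hp)), hu p⟩
        · exact ⟨t1, hQ0Q (Finset.mem_insert_self _ _), hp⟩
      obtain ⟨t0, ht0Q, ht0⟩ := hex0
      have hsub : Q.filter (fun t => p ∈ Pf t) ⊆ Q.erase t0 := by
        intro x hx
        rw [Finset.mem_erase]
        obtain ⟨hxQ, hxp⟩ := Finset.mem_filter.mp hx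
        exact ⟨fun h => ht0 (h ▸ hxp), hxQ⟩
      have := Finset.card_le_card hsub
      rw [Finset.card_erase_of_mem ht0Q, hQcard] at this
      omega
    -- the room assignment
    have hCcard : Fintype.card {t : T // t ∉ Q} = m * 3 := by
      rw [Fintype.card_subtype_compl (fun t => t ∈ Q)]
      have : Fintype.card {t : T // t ∈ Q} = Q.card := Fintype.card_coe Q
      rw [this, hQcard]
      omega
    have e : {t : T // t ∉ Q} ≃ Fin m × Fin 3 :=
      Fintype.equivOfCardEq (by rw [hCcard]; simp)
    set room : T → Fin (m + 1) :=
      fun t => if h : t ∈ Q then 0 else (e ⟨t, h⟩).1.succ with hroomdef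
    have hfib0 : univ.filter (fun t => room t = 0) = Q := by
      ext t
      simp only [Finset.mem_filter, Finset.mem_univ, true_and, hroomdef]
      by_cases h : t ∈ Q
      · simp [h]
      · simp [h, Fin.succ_ne_zero]
    have hfibcards : ∀ r : Fin (m + 1), r ≠ 0 →
        (univ.filter (fun t => room t = r)).card = 3 := by
      intro r hr
      obtain ⟨j, rfl⟩ := Fin.eq_succ_of_ne_zero hr
      have hmem : ∀ t, room t = j.succ ↔ ∃ h : t ∉ Q, (e ⟨t, h⟩).1 = j := by
        intro t
        rw [hroomdef]
        by_cases h : t ∈ Q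
        · simp only [dif_pos h]
          constructor
          · intro h0; exact absurd h0.symm (Fin.succ_ne_zero j)
          · rintro ⟨h', _⟩; exact absurd h h'
        · simp only [dif_neg h]
          constructor
          · intro h0; exact ⟨h, Fin.succ_injective _ h0⟩
          · rintro ⟨h', h2⟩; exact congrArg Fin.succ h2
      have hS2 : (univ.filter (fun y : Fin m × Fin 3 => y.1 = j)).card = 3 := by
        have hprod : univ.filter (fun y : Fin m × Fin 3 => y.1 = j)
            = {j} ×ˢ (univ : Finset (Fin 3)) := by
          ext y
          simp only [Finset.mem_filter, Finset.mem_univ, true_and, Finset.mem_product,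
            Finset.mem_singleton, and_true]
        rw [hprod, Finset.card_product]
        simp
      rw [← hS2]
      refine Finset.card_bij
        (fun t ht => e ⟨t, ((hmem t).mp (Finset.mem_filter.mp ht).2).choose⟩) ?_ ?_ ?_
      · intro t ht
        simp only [Finset.mem_filter, Finset.mem_univ, true_and]
        exact ((hmem t).mp (Finset.mem_filter.mp ht).2).choose_spec
      · intro t1 ht1 t2 ht2 heq
        have := e.injective heq
        exact congrArg Subtype.val this
      · intro y hy
        have hy1 : y.1 = j := (Finset.mem_filter.mp hy).2
        refine ⟨(e.symm y).1, ?_, ?_⟩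
        · simp only [Finset.mem_filter, Finset.mem_univ, true_and]
          rw [hmem]
          refine ⟨(e.symm y).2, ?_⟩
          have : (⟨(e.symm y).1, (e.symm y).2⟩ : {t : T // t ∉ Q}) = e.symm y := rfl
          rw [this, Equiv.apply_symm_apply, hy1]
        · exact Equiv.apply_symm_apply e y
    -- multiplicity bound within each room
    have hfibmult : ∀ (r : Fin (m + 1)) (p : P),
        (univ.filter (fun t : {x : T // room x = r} => p ∈ Pf t.1)).card ≤ 3 := by
      intro r p
      have hle : (univ.filter (fun t : {x : T // room x = r} => p ∈ Pf t.1)).card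
          ≤ ((univ.filter (fun t : T => room t = r)).filter (fun t => p ∈ Pf t)).card := by
        refine Finset.card_le_card_of_injOn (fun t => t.1) ?_ ?_
        · intro t ht
          simp only [Finset.mem_filter, Finset.mem_univ, true_and] at ht ⊢
          exact Finset.mem_filter.mpr ⟨Finset.mem_filter.mpr ⟨Finset.mem_univ _, t.2⟩, by simpa using ht⟩
        · intro a _ b _ h
          exact Subtype.ext h
      refine le_trans hle ?_
      by_cases hr : r = 0
      · subst hr
        rw [hfib0]
        exact hQmult p
      · refine le_trans (Finset.card_le_card (Finset.filter_subset _ _)) ?_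
        rw [hfibcards r hr]
    -- color each room
    choose sch hS1x hS2x using fun r : Fin (m + 1) =>
      coloring (fun t : {x : T // room x = r} => Pf t.1) (fun t => hPf t.1) (hfibmult r)
    refine ⟨room, fun j t => sch (room t) j ⟨t, rfl⟩, ?_, hfibcards, ?_, ?_⟩
    · rw [hfib0]; exact hQcard
    · intro t
      exact hS1x (room t) ⟨t, rfl⟩
    · intro j t t' hne hr
      have key : ∀ (r : Fin (m + 1)) (h : room t' = r),
          sch (room t') j ⟨t', rfl⟩ = sch r j ⟨t', h⟩ := by
        intro r h
        subst h
        rfl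
      show sch (room t) j ⟨t, rfl⟩ ≠ sch (room t') j ⟨t', rfl⟩
      rw [key (room t) hr.symm]
      exact hS2x (room t) j ⟨t, rfl⟩ ⟨t', hr.symm⟩
        (fun hE => hne (congrArg Subtype.val hE))

end Main
end

section
/- Let T be a finite set of teams, R a finite set of rooms with size(r) ∈ {3,4} for each r ∈ R, and let φ₁, φ₂, φ₃ : T → R be room assignments such that for every round j ∈ {1,2,3} and every room r ∈ R exactly size(r) teams t satisfy φ_j(t) = r. Then there exist functions ω₁, ω₂, ω₃ : T → {1,2,3,4} such that for every round j and every room r the restriction of ω_j to {t ∈ T : φ_j(t) = r} is a bijection onto {1, …, size(r)}, and every team t receives three distinct order positions, i.e. |{ω₁(t), ω₂(t), ω₃(t)}| = 3. -/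
open Finset

lemma hall_aux {ι α : Type*} [Fintype ι] [DecidableEq α]
    (B : ι → Finset α) (k : ℕ) (hk : 0 < k)
    (hcard : ∀ i, k ≤ (B i).card)
    (hdeg : ∀ a, (univ.filter (fun i => a ∈ B i)).card ≤ k) :
    ∃ g : ι → α, Function.Injective g ∧ ∀ i, g i ∈ B i := by
  rw [← Finset.all_card_le_biUnion_card_iff_exists_injective]
  intro s
  have key : k * s.card ≤ k * (s.biUnion B).card := by
    calc k * s.card = ∑ _i ∈ s, k := by simp [mul_comm]
    _ ≤ ∑ i ∈ s, (B i).card := Finset.sum_le_sum (fun i _ => hcard i)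
    _ = ∑ i ∈ s, ∑ a ∈ s.biUnion B, (if a ∈ B i then 1 else 0) := by
          refine Finset.sum_congr rfl (fun i hi => ?_)
          rw [Finset.sum_boole, Finset.filter_mem_eq_inter,
            Finset.inter_eq_right.mpr (Finset.subset_biUnion_of_mem B hi), Nat.cast_id]
    _ = ∑ a ∈ s.biUnion B, ∑ i ∈ s, (if a ∈ B i then 1 else 0) := Finset.sum_comm
    _ ≤ ∑ _a ∈ s.biUnion B, k := by
          refine Finset.sum_le_sum (fun a _ => ?_)
          rw [Finset.sum_boole]
          calc ((s.filter (fun i => a ∈ B i)).card : ℕ) ≤ (univ.filter (fun i => a ∈ B i)).card :=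
                Finset.card_le_card (Finset.filter_subset_filter _ (Finset.subset_univ s))
          _ ≤ k := hdeg a
    _ = k * (s.biUnion B).card := by simp [mul_comm]
  exact Nat.le_of_mul_le_mul_left key hk

lemma double_count {ι α : Type*} [Fintype ι] [Fintype α] [DecidableEq α] (B : ι → Finset α) :
    ∑ i, (B i).card = ∑ a, (univ.filter (fun i => a ∈ B i)).card := by
  have : ∀ i, (B i).card = ∑ a : α, (if a ∈ B i then 1 else 0) := by
    intro i
    rw [← Finset.card_filter]
    congr 1
    simp [Finset.filter_univ_mem]
  simp only [this, Finset.card_filter]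
  exact Finset.sum_comm

lemma reg_decomp {ι α : Type*} [Fintype ι] [Fintype α] [DecidableEq ι] [DecidableEq α] :
    ∀ (k : ℕ) (B : ι → Finset α),
    (∀ i, (B i).card = k) → (∀ a, (univ.filter (fun i => a ∈ B i)).card = k) →
    ∃ g : Fin k → ι → α, (∀ m, Function.Bijective (g m)) ∧ (∀ m i, g m i ∈ B i) ∧
      (∀ i m m', g m i = g m' i → m = m') := by
  intro k
  induction k with
  | zero => exact fun B h1 h2 => ⟨fun m => m.elim0, fun m => m.elim0, fun m => m.elim0,
      fun i m => m.elim0⟩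
  | succ k ih =>
    intro B h1 h2
    have hcards : Fintype.card ι = Fintype.card α := by
      have hd := double_count B
      simp only [h1, h2, Finset.sum_const, smul_eq_mul, Finset.card_univ] at hd
      exact Nat.eq_of_mul_eq_mul_right (Nat.succ_pos k) hd
    obtain ⟨g₀, hg₀inj, hg₀mem⟩ := hall_aux B (k+1) (Nat.succ_pos k)
      (fun i => (h1 i).ge) (fun a => (h2 a).le)
    have hg₀bij : Function.Bijective g₀ :=
      (Fintype.bijective_iff_injective_and_card g₀).mpr ⟨hg₀inj, hcards⟩
    set B' := fun i => (B i).erase (g₀ i) with hB'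
    have h1' : ∀ i, (B' i).card = k := fun i => by
      simp only [hB']; rw [Finset.card_erase_of_mem (hg₀mem i), h1]; omega
    have h2' : ∀ a, (univ.filter (fun i => a ∈ B' i)).card = k := by
      intro a
      obtain ⟨i₀, hi₀⟩ := hg₀bij.2 a
      have heq : univ.filter (fun i => a ∈ B' i) = (univ.filter (fun i => a ∈ B i)).erase i₀ := by
        ext i
        simp only [hB', Finset.mem_filter, Finset.mem_univ, true_and, Finset.mem_erase]
        constructor
        · rintro ⟨hne, hmem⟩
          refine ⟨fun h => hne ?_, hmem⟩
          rw [h, hi₀]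
        · rintro ⟨hne, hmem⟩
          exact ⟨fun h => hne (hg₀inj (hi₀.trans h)).symm, hmem⟩
      have hi₀mem : i₀ ∈ univ.filter (fun i => a ∈ B i) := by
        simp only [Finset.mem_filter, Finset.mem_univ, true_and]
        rw [← hi₀]; exact hg₀mem i₀
      rw [heq, Finset.card_erase_of_mem hi₀mem, h2]; omega
    obtain ⟨g', hbij, hmem, hdist⟩ := ih B' h1' h2'
    refine ⟨Fin.cases g₀ g', ?_, ?_, ?_⟩
    · intro m
      induction m using Fin.cases with
      | zero => simpa using hg₀bij
      | succ m => simpa using hbij m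
    · intro m i
      induction m using Fin.cases with
      | zero => simpa using hg₀mem i
      | succ m => simpa using Finset.erase_subset _ _ (hmem m i)
    · intro i m m' h
      induction m using Fin.cases with
      | zero =>
        induction m' using Fin.cases with
        | zero => rfl
        | succ m' =>
          simp only [Fin.cases_zero, Fin.cases_succ] at h
          exact absurd h.symm (Finset.ne_of_mem_erase (hmem m' i))
      | succ m =>
        induction m' using Fin.cases with
        | zero =>
          simp only [Fin.cases_zero, Fin.cases_succ] at h
          exact absurd h (Finset.ne_of_mem_erase (hmem m i))
        | succ m' =>
          simp only [Fin.cases_succ] at h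
          exact congrArg Fin.succ (hdist i m m' h)

set_option maxHeartbeats 1000000 in
/-- Given room assignments `φ j : T → R` for the three rounds such that in every round
each room `r` receives exactly `size r ∈ {3,4}` teams, there exist order assignments
`ω j : T → ℕ` such that in every round the teams of each room `r` are bijectively mapped
onto the order positions `{1, …, size r}`, and every team receives three distinct order
positions in its three Fights. -/
theorem order_fair_completion
    {T R : Type*} [Fintype T] [Fintype R] [DecidableEq T] [DecidableEq R]
    (size : R → ℕ) (hsize : ∀ r, size r = 3 ∨ size r = 4)
    (φ : Fin 3 → T → R)
    (hfill : ∀ (j : Fin 3) (r : R),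
      (Finset.univ.filter (fun t => φ j t = r)).card = size r) :
    ∃ ω : Fin 3 → T → ℕ,
      (∀ (j : Fin 3) (r : R),
        Set.BijOn (ω j) {t : T | φ j t = r} (Set.Icc 1 (size r))) ∧
      (∀ t : T, ({ω 0 t, ω 1 t, ω 2 t} : Finset ℕ).card = 3) := by
  classical
  -- incidence sets of fights
  set A : Fin 3 × R → Finset T := fun f => Finset.univ.filter (fun t => φ f.1 t = f.2) with hA
  have hAmem : ∀ f t, t ∈ A f ↔ φ f.1 t = f.2 := by
    intro f t; simp [hA]
  have hAcard : ∀ f, (A f).card = size f.2 := fun f => hfill f.1 f.2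
  have hAself : ∀ (j : Fin 3) (t : T), t ∈ A (j, φ j t) := by
    intro j t; rw [hAmem]
  -- Step 1: Hall for the size-4 fights
  obtain ⟨g₁, hg₁inj, hg₁mem⟩ :
      ∃ g₁ : {f : Fin 3 × R // size f.2 = 4} → T,
        Function.Injective g₁ ∧ ∀ f, g₁ f ∈ A f.1 := by
    have hd4 : ∀ t : T,
        (univ.filter (fun f : {f : Fin 3 × R // size f.2 = 4} => t ∈ A f.1)).card ≤ 4 := by
      intro t
      calc (univ.filter (fun f : {f : Fin 3 × R // size f.2 = 4} => t ∈ A f.1)).card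
          ≤ (univ : Finset (Fin 3)).card := by
            apply Finset.card_le_card_of_injOn (fun f => f.1.1)
            · intro f _; exact Finset.mem_univ _
            · intro f hf f' hf' h
              dsimp only at h
              simp only [Finset.mem_coe, Finset.mem_filter] at hf hf'
              have h1 : φ f.1.1 t = f.1.2 := (hAmem _ _).1 hf.2
              have h2 : φ f'.1.1 t = f'.1.2 := (hAmem _ _).1 hf'.2
              apply Subtype.ext
              have heta : f.1 = (f.1.1, φ f.1.1 t) := by rw [h1]
              rw [heta, h, h2]
        _ ≤ 4 := by simp
    refine hall_aux (fun f : {f : Fin 3 × R // size f.2 = 4} => A f.1) 4 ?_ ?_ ?_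
    · norm_num
    · intro f; rw [hAcard, f.2]
    · exact hd4
  -- the bipartite system: real fights plus dummy fights grouping chosen teams
  set ι := (Fin 3 × R) ⊕ {r : R // size r = 4} with hι
  set B : ι → Finset T := Sum.elim
      (fun f => if h : size f.2 = 4 then (A f).erase (g₁ ⟨f, h⟩) else A f)
      (fun k => univ.image (fun j : Fin 3 => g₁ ⟨(j, k.1), k.2⟩)) with hB
  have hBinl : ∀ f, B (Sum.inl f) =
      if h : size f.2 = 4 then (A f).erase (g₁ ⟨f, h⟩) else A f := fun f => rfl
  have hBinr : ∀ k, B (Sum.inr k) = univ.image (fun j : Fin 3 => g₁ ⟨(j, k.1), k.2⟩) :=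
    fun k => rfl
  have hBsubA : ∀ f, B (Sum.inl f) ⊆ A f := by
    intro f
    rw [hBinl]
    split_ifs with h
    · exact Finset.erase_subset _ _
    · exact subset_rfl
  -- membership criteria for B (inl f)
  have hmemB : ∀ f t, t ∈ A f → (∀ h : size f.2 = 4, g₁ ⟨f, h⟩ ≠ t) → t ∈ B (Sum.inl f) := by
    intro f t ht hne
    rw [hBinl]
    split_ifs with h
    · exact Finset.mem_erase.mpr ⟨fun hh => hne h hh.symm, ht⟩
    · exact ht
  have hnotB : ∀ f t, t ∈ A f → t ∉ B (Sum.inl f) → ∃ h : size f.2 = 4, g₁ ⟨f, h⟩ = t := by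
    intro f t ht hnot
    rw [hBinl] at hnot
    by_cases h : size f.2 = 4
    · rw [dif_pos h] at hnot
      refine ⟨h, ?_⟩
      by_contra hne
      exact hnot (Finset.mem_erase.mpr ⟨fun hh => hne hh.symm, ht⟩)
    · rw [dif_neg h] at hnot; exact absurd ht hnot
  have hchosen_notB : ∀ (f : Fin 3 × R) (h : size f.2 = 4), g₁ ⟨f, h⟩ ∉ B (Sum.inl f) := by
    intro f h
    rw [hBinl, dif_pos h]
    exact Finset.notMem_erase _ _
  -- cardinalities of the sets
  have hBcard : ∀ i, (B i).card = 3 := by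
    intro i
    match i with
    | Sum.inl f =>
      rw [hBinl]
      split_ifs with h
      · rw [Finset.card_erase_of_mem (hg₁mem ⟨f, h⟩), hAcard, h]
      · rw [hAcard]
        rcases hsize f.2 with h3 | h4
        · exact h3
        · exact absurd h4 h
    | Sum.inr k =>
      rw [hBinr, Finset.card_image_of_injective _ (fun j j' hjj => ?_), Finset.card_univ,
        Fintype.card_fin]
      have h := hg₁inj hjj
      have h2 : (j, k.1) = (j', k.1) := congrArg Subtype.val h
      exact (Prod.ext_iff.1 h2).1
  -- each team lies in exactly 3 of the sets
  have hBdeg : ∀ t, (univ.filter (fun i => t ∈ B i)).card = 3 := by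
    intro t
    by_cases hch : ∃ f₀, g₁ f₀ = t
    · obtain ⟨⟨⟨j₀, r₀⟩, h₀4⟩, hf₀⟩ := hch
      have hφ₀ : φ j₀ t = r₀ := by
        have := hg₁mem ⟨(j₀, r₀), h₀4⟩
        rw [hf₀] at this
        exact (hAmem _ _).1 this
      have hset : univ.filter (fun i => t ∈ B i) =
          univ.image (fun j : Fin 3 =>
            if j = j₀ then (Sum.inr ⟨r₀, h₀4⟩ : ι) else Sum.inl (j, φ j t)) := by
        ext i
        simp only [Finset.mem_filter, Finset.mem_univ, true_and, Finset.mem_image]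
        constructor
        · intro hi
          match i with
          | Sum.inl f =>
            have htA : t ∈ A f := hBsubA f hi
            have hfeq : φ f.1 t = f.2 := (hAmem _ _).1 htA
            have hne : f.1 ≠ j₀ := by
              intro hf1
              have hfe : f = (j₀, r₀) := by
                have : f = (f.1, f.2) := rfl
                rw [this, hf1, ← hfeq, hf1, hφ₀]
              rw [hfe] at hi
              exact hchosen_notB (j₀, r₀) h₀4 (by rw [hf₀]; exact hi)
            refine ⟨f.1, ?_⟩
            rw [if_neg hne, hfeq]
          | Sum.inr k =>
            rw [hBinr, Finset.mem_image] at hi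
            obtain ⟨j, _, hj⟩ := hi
            have : (⟨(j, k.1), k.2⟩ : {f : Fin 3 × R // size f.2 = 4}) = ⟨(j₀, r₀), h₀4⟩ :=
              hg₁inj (hj.trans hf₀.symm)
            have hpair : (j, k.1) = (j₀, r₀) := congrArg Subtype.val this
            have hk1 : k.1 = r₀ := (Prod.ext_iff.1 hpair).2
            refine ⟨j₀, ?_⟩
            rw [if_pos rfl]
            congr 1
            exact Subtype.ext hk1.symm
        · rintro ⟨j, rfl⟩
          by_cases hj : j = j₀
          · rw [if_pos hj, hBinr, Finset.mem_image]
            exact ⟨j₀, Finset.mem_univ _, hf₀⟩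
          · rw [if_neg hj]
            refine hmemB _ _ (hAself j t) ?_
            intro h hgt
            have := hg₁inj (hgt.trans hf₀.symm)
            have hpair : (j, φ j t) = (j₀, r₀) := congrArg Subtype.val this
            exact hj (Prod.ext_iff.1 hpair).1
      rw [hset, Finset.card_image_of_injective _ ?_, Finset.card_univ, Fintype.card_fin]
      intro j j' hjj
      dsimp only at hjj
      by_cases h1 : j = j₀ <;> by_cases h2 : j' = j₀
      · rw [h1, h2]
      · rw [if_pos h1, if_neg h2] at hjj; simp at hjj
      · rw [if_neg h1, if_pos h2] at hjj; simp at hjj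
      · rw [if_neg h1, if_neg h2] at hjj
        exact (Prod.ext_iff.1 (Sum.inl_injective hjj)).1
    · have hset : univ.filter (fun i => t ∈ B i) =
          univ.image (fun j : Fin 3 => (Sum.inl (j, φ j t) : ι)) := by
        ext i
        simp only [Finset.mem_filter, Finset.mem_univ, true_and, Finset.mem_image]
        constructor
        · intro hi
          match i with
          | Sum.inl f =>
            have htA : t ∈ A f := hBsubA f hi
            have hfeq : φ f.1 t = f.2 := (hAmem _ _).1 htA
            refine ⟨f.1, ?_⟩
            rw [hfeq]
          | Sum.inr k =>
            rw [hBinr, Finset.mem_image] at hi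
            obtain ⟨j, _, hj⟩ := hi
            exact absurd ⟨_, hj⟩ hch
        · rintro ⟨j, rfl⟩
          refine hmemB _ _ (hAself j t) ?_
          intro h hgt
          exact hch ⟨_, hgt⟩
      rw [hset, Finset.card_image_of_injective _ ?_, Finset.card_univ, Fintype.card_fin]
      intro j j' hjj
      exact (Prod.ext_iff.1 (Sum.inl_injective hjj)).1
  -- decompose into three systems of distinct representatives
  obtain ⟨g, hgbij, hgmem, hgdist⟩ := reg_decomp 3 B hBcard hBdeg
  -- every element of B i is hit by some g m
  have hhit : ∀ i, ∀ t ∈ B i, ∃ m : Fin 3, g m i = t := by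
    intro i t ht
    have hsub : univ.image (fun m : Fin 3 => g m i) ⊆ B i := by
      intro x hx
      rw [Finset.mem_image] at hx
      obtain ⟨m, _, hm⟩ := hx
      rw [← hm]; exact hgmem m i
    have hcard_im : (univ.image (fun m : Fin 3 => g m i)).card = 3 := by
      rw [Finset.card_image_of_injective _ (fun m m' h => hgdist i m m' h), Finset.card_univ,
        Fintype.card_fin]
    have := Finset.eq_of_subset_of_card_le hsub (by rw [hcard_im, hBcard])
    rw [← this, Finset.mem_image] at ht
    obtain ⟨m, _, hm⟩ := ht
    exact ⟨m, hm⟩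
  -- the order assignment
  set ω : Fin 3 → T → ℕ := fun j t =>
    if g 0 (Sum.inl (j, φ j t)) = t then 1
    else if g 1 (Sum.inl (j, φ j t)) = t then 2
    else if g 2 (Sum.inl (j, φ j t)) = t then 3 else 4 with hω
  have hωm : ∀ (j : Fin 3) (t : T) (m : Fin 3),
      g m (Sum.inl (j, φ j t)) = t → ω j t = m.1 + 1 := by
    intro j t m hm
    have hm3 : m = 0 ∨ m = 1 ∨ m = 2 := by fin_cases m <;> simp
    simp only [hω]
    split_ifs with h0 h1 h2
    · have hh : m = 0 := hgdist _ m 0 (hm.trans h0.symm)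
      simp [hh]
    · have hh : m = 1 := hgdist _ m 1 (hm.trans h1.symm)
      simp [hh]
    · have hh : m = 2 := hgdist _ m 2 (hm.trans h2.symm)
      simp [hh]
    · exfalso
      rcases hm3 with rfl | rfl | rfl
      exacts [h0 hm, h1 hm, h2 hm]
  have hω4 : ∀ (j : Fin 3) (t : T), t ∉ B (Sum.inl (j, φ j t)) → ω j t = 4 := by
    intro j t ht
    have hno : ∀ m : Fin 3, g m (Sum.inl (j, φ j t)) ≠ t := by
      intro m he
      have hmem := hgmem m (Sum.inl (j, φ j t))
      rw [he] at hmem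
      exact ht hmem
    simp only [hω]
    rw [if_neg (hno 0), if_neg (hno 1), if_neg (hno 2)]
  have key : ∀ (j : Fin 3) (t : T),
      (ω j t = 4 ∧ t ∉ B (Sum.inl (j, φ j t))) ∨
      (∃ m : Fin 3, ω j t = m.1 + 1 ∧ g m (Sum.inl (j, φ j t)) = t) := by
    intro j t
    by_cases ht : t ∈ B (Sum.inl (j, φ j t))
    · obtain ⟨m, hm⟩ := hhit _ t ht
      exact Or.inr ⟨m, hωm j t m hm, hm⟩
    · exact Or.inl ⟨hω4 j t ht, ht⟩
  refine ⟨ω, ?_, ?_⟩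
  · -- BijOn
    intro j r
    have hsr : 3 ≤ size r := by rcases hsize r with h | h <;> omega
    constructor
    · -- MapsTo
      intro t ht
      simp only [Set.mem_setOf_eq] at ht
      rcases key j t with ⟨h4, hnot⟩ | ⟨m, hval, _⟩
      · obtain ⟨h4', _⟩ := hnotB (j, φ j t) t (hAself j t) hnot
        simp only at h4'
        rw [ht] at h4'
        rw [h4]
        simp only [Set.mem_Icc]
        omega
      · rw [hval]
        simp only [Set.mem_Icc]
        have := m.isLt
        omega
    constructor
    · -- InjOn
      intro t ht t' ht' heq
      simp only [Set.mem_setOf_eq] at ht ht'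
      rcases key j t with ⟨h4, hnot⟩ | ⟨m, hval, hgm⟩ <;>
        rcases key j t' with ⟨h4', hnot'⟩ | ⟨m', hval', hgm'⟩
      · obtain ⟨hs4, hg4⟩ := hnotB (j, φ j t) t (hAself j t) hnot
        obtain ⟨hs4', hg4'⟩ := hnotB (j, φ j t') t' (hAself j t') hnot'
        rw [← hg4, ← hg4']
        congr 1
        apply Subtype.ext
        simp only [ht, ht']
      · exfalso; rw [h4, hval'] at heq; have := m'.isLt; omega
      · exfalso; rw [hval, h4'] at heq; have := m.isLt; omega
      · rw [hval, hval'] at heq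
        have hmm : m = m' := Fin.ext (by omega)
        rw [← hgm, ← hgm', hmm]
        congr 2
        rw [ht, ht']
    · -- SurjOn
      intro v hv
      simp only [Set.mem_Icc] at hv
      by_cases hv4 : v = 4
      · -- v = 4, so size r = 4 and the chosen team works
        have h4 : size r = 4 := by
          rcases hsize r with h | h
          · omega
          · exact h
        set t := g₁ ⟨(j, r), h4⟩ with htdef
        have htA : t ∈ A (j, r) := hg₁mem _
        have hφt : φ j t = r := (hAmem _ _).1 htA
        refine ⟨t, hφt, ?_⟩
        have : t ∉ B (Sum.inl (j, φ j t)) := by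
          rw [hφt]
          exact hchosen_notB (j, r) h4
        rw [hω4 j t this, hv4]
      · -- v ∈ {1,2,3}
        have hsr4 : size r ≤ 4 := by rcases hsize r with h | h <;> omega
        have hv3 : v - 1 < 3 := by omega
        set t := g ⟨v - 1, hv3⟩ (Sum.inl (j, r)) with htdef
        have htB : t ∈ B (Sum.inl (j, r)) := hgmem _ _
        have htA : t ∈ A (j, r) := hBsubA _ htB
        have hφt : φ j t = r := (hAmem _ _).1 htA
        refine ⟨t, hφt, ?_⟩
        have hgt : g ⟨v - 1, hv3⟩ (Sum.inl (j, φ j t)) = t := by rw [hφt]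
        rw [hωm j t ⟨v - 1, hv3⟩ hgt]
        show v - 1 + 1 = v
        omega
  · -- distinct positions for each team
    intro t
    have hpair : ∀ j j' : Fin 3, j ≠ j' → ω j t ≠ ω j' t := by
      intro j j' hne heq
      rcases key j t with ⟨h4, hnot⟩ | ⟨m, hval, hgm⟩ <;>
        rcases key j' t with ⟨h4', hnot'⟩ | ⟨m', hval', hgm'⟩
      · obtain ⟨hs4, hg4⟩ := hnotB (j, φ j t) t (hAself j t) hnot
        obtain ⟨hs4', hg4'⟩ := hnotB (j', φ j' t) t (hAself j' t) hnot'
        have : (⟨(j, φ j t), hs4⟩ : {f : Fin 3 × R // size f.2 = 4}) = ⟨(j', φ j' t), hs4'⟩ :=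
          hg₁inj (hg4.trans hg4'.symm)
        have hpp : (j, φ j t) = (j', φ j' t) := congrArg Subtype.val this
        exact hne (Prod.ext_iff.1 hpp).1
      · rw [h4, hval'] at heq; have := m'.isLt; omega
      · rw [hval, h4'] at heq; have := m.isLt; omega
      · rw [hval, hval'] at heq
        have hmm : m = m' := Fin.ext (by omega)
        rw [hmm] at hgm
        have := (hgbij m').1 (hgm.trans hgm'.symm)
        have hpp : (j, φ j t) = (j', φ j' t) := Sum.inl_injective this
        exact hne (Prod.ext_iff.1 hpp).1
    have h01 := hpair 0 1 (by decide)
    have h02 := hpair 0 2 (by decide)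
    have h12 := hpair 1 2 (by decide)
    rw [Finset.card_insert_of_notMem (by simp [h01, h02]),
      Finset.card_insert_of_notMem (by simp [h12]), Finset.card_singleton]
end

section
/- There exists a binary vector x = (x_{ijkq}) satisfying the feasibility constraints (2)–(5) together with the fairness inequalities x_{ijkq} + Σ_{w∈[3]} x_{αjkw} + c_{α ℓ(i,q)} ≤ 2 for every round j ∈ [3], every room k ∈ [s], every q ∈ [3], and every ordered pair of distinct teams i ≠ α, if and only if there exists a fair schedule. Moreover, a binary vector x satisfying (2)–(5) together with these fairness inequalities imposed only for rounds j ∈ {1,2} exists if and only if there exists a weakly fair schedule. -/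
lemma exists_unique_of_binary_sum_one {ι : Type*} [Fintype ι] [DecidableEq ι] (g : ι → ℕ)
    (hb : ∀ a, g a = 0 ∨ g a = 1) (h1 : ∑ a, g a = 1) : ∃! a, g a = 1 := by
  have : ∃ a ∈ Finset.univ, g a ≠ 0 := Finset.exists_ne_zero_of_sum_ne_zero (by omega)
  obtain ⟨a, -, ha⟩ := this
  have ha1 : g a = 1 := (hb a).resolve_left ha
  refine ⟨a, ha1, fun b hb1 => ?_⟩
  by_contra hne
  have h2 : g b + g a ≤ ∑ a, g a := by
    rw [← Finset.sum_pair hne]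
    exact Finset.sum_le_sum_of_subset (Finset.subset_univ _)
  omega

lemma mem_triple_iff {m : ℕ} (f : Fin 3 → Fin m) (a : Fin m) :
    a ∈ ({f 0, f 1, f 2} : Finset (Fin m)) ↔ ∃ j, f j = a := by
  simp only [Finset.mem_insert, Finset.mem_singleton]
  constructor
  · rintro (h | h | h)
    exacts [⟨0, h.symm⟩, ⟨1, h.symm⟩, ⟨2, h.symm⟩]
  · rintro ⟨j, h⟩
    fin_cases j
    exacts [Or.inl h.symm, Or.inr (Or.inl h.symm), Or.inr (Or.inr h.symm)]

lemma ilp_forward {n m s : ℕ} (size : Fin s → ℕ) (pq : Fin n → Fin 3 → Fin m)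
    (J : Fin 3 → Prop)
    (x : Fin n → Fin 3 → Fin s → Fin 3 → ℕ)
    (hb : ∀ i j k q, x i j k q = 0 ∨ x i j k q = 1)
    (h2 : ∀ (i : Fin n) (q : Fin 3), ∑ j : Fin 3, ∑ k : Fin s, x i j k q = 1)
    (h3 : ∀ (i : Fin n) (j : Fin 3), ∑ k : Fin s, ∑ q : Fin 3, x i j k q = 1)
    (h4 : ∀ (j : Fin 3) (k : Fin s), ∑ i : Fin n, ∑ q : Fin 3, x i j k q = size k)
    (h5 : ∀ (j : Fin 3) (k : Fin s) (ℓ : Fin m),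
        ∑ i : Fin n, ∑ q : Fin 3, (if pq i q = ℓ then x i j k q else 0) ≤ 1)
    (h6 : ∀ j : Fin 3, J j → ∀ (k : Fin s) (q : Fin 3) (i α : Fin n), i ≠ α →
        x i j k q + (∑ w : Fin 3, x α j k w) +
          (if pq i q ∈ ({pq α 0, pq α 1, pq α 2} : Finset (Fin m)) then 1 else 0) ≤ 2) :
    (∃ (π : Fin 3 → Fin n → Fin m) (φ : Fin 3 → Fin n → Fin s),
      (∀ i : Fin n, ({π 0 i, π 1 i, π 2 i} : Finset (Fin m))
        = {pq i 0, pq i 1, pq i 2}) ∧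
      (∀ (j : Fin 3) (i i' : Fin n), i ≠ i' → φ j i = φ j i' → π j i ≠ π j i') ∧
      (∀ (j : Fin 3) (k : Fin s),
        (Finset.univ.filter (fun i => φ j i = k)).card = size k) ∧
      (∀ j : Fin 3, J j → ∀ i i' : Fin n, i ≠ i' → φ j i = φ j i' →
        π j i ∉ ({pq i' 0, pq i' 1, pq i' 2} : Finset (Fin m)))) := by
  have key : ∀ (i : Fin n) (j : Fin 3), ∃! p : Fin s × Fin 3, x i j p.1 p.2 = 1 := by
    intro i j
    exact exists_unique_of_binary_sum_one (fun p : Fin s × Fin 3 => x i j p.1 p.2)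
      (fun p => hb i j p.1 p.2) (by rw [Fintype.sum_prod_type]; exact h3 i j)
  choose kq hkq1' hkq2' using key
  have hkq1 : ∀ i j, x i j (kq i j).1 (kq i j).2 = 1 := hkq1'
  have hkq2 : ∀ i j k q, x i j k q = 1 → (k, q) = kq i j := fun i j k q h => hkq2' i j (k, q) h
  have hpt : ∀ i j k q, x i j k q = if k = (kq i j).1 ∧ q = (kq i j).2 then 1 else 0 := by
    intro i j k q
    split
    · next h => rw [h.1, h.2]; exact hkq1 i j
    · next h =>
      rcases hb i j k q with h0 | h1
      · exact h0
      · exact absurd (hkq2 i j k q h1)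
          (fun hc => h ⟨congrArg Prod.fst hc, congrArg Prod.snd hc⟩)
  have hsurj : ∀ (i : Fin n) (q : Fin 3), ∃ j, (kq i j).2 = q := by
    intro i q
    have h1 : (∑ j : Fin 3, ∑ k : Fin s, x i j k q) ≠ 0 := by rw [h2 i q]; omega
    obtain ⟨j, -, hj⟩ := Finset.exists_ne_zero_of_sum_ne_zero h1
    obtain ⟨k, -, hk⟩ := Finset.exists_ne_zero_of_sum_ne_zero hj
    have hx1 : x i j k q = 1 := ((hb i j k q).resolve_left hk)
    exact ⟨j, (congrArg Prod.snd (hkq2 i j k q hx1)).symm⟩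
  refine ⟨fun j i => pq i (kq i j).2, fun j i => (kq i j).1, ?_, ?_, ?_, ?_⟩
  · -- (i)
    intro i
    ext a
    rw [mem_triple_iff (fun j => pq i (kq i j).2) a, mem_triple_iff (fun q => pq i q) a]
    constructor
    · rintro ⟨j, h⟩; exact ⟨(kq i j).2, h⟩
    · rintro ⟨q, h⟩
      obtain ⟨j, hj⟩ := hsurj i q
      exact ⟨j, by rw [hj]; exact h⟩
  · -- (ii)
    intro j i i' hne hphi0 hpi0
    have hphi : (kq i j).1 = (kq i' j).1 := hphi0
    have hpi : pq i (kq i j).2 = pq i' (kq i' j).2 := hpi0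
    have hle := h5 j ((kq i j).1) (pq i (kq i j).2)
    have ha : (1:ℕ) ≤ ∑ q, (if pq i q = pq i (kq i j).2 then x i j (kq i j).1 q else 0) := by
      have h0 := Finset.single_le_sum
        (f := fun q => if pq i q = pq i (kq i j).2 then x i j (kq i j).1 q else 0)
        (fun q _ => Nat.zero_le _) (Finset.mem_univ (kq i j).2)
      have h : (if pq i (kq i j).2 = pq i (kq i j).2 then x i j (kq i j).1 (kq i j).2 else 0)
          ≤ ∑ q, (if pq i q = pq i (kq i j).2 then x i j (kq i j).1 q else 0) := h0
      rwa [if_pos rfl, hkq1 i j] at h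
    have ha' : (1:ℕ) ≤ ∑ q, (if pq i' q = pq i (kq i j).2 then x i' j (kq i j).1 q else 0) := by
      have h0 := Finset.single_le_sum
        (f := fun q => if pq i' q = pq i (kq i j).2 then x i' j (kq i j).1 q else 0)
        (fun q _ => Nat.zero_le _) (Finset.mem_univ (kq i' j).2)
      have h : (if pq i' (kq i' j).2 = pq i (kq i j).2 then x i' j (kq i j).1 (kq i' j).2 else 0)
          ≤ ∑ q, (if pq i' q = pq i (kq i j).2 then x i' j (kq i j).1 q else 0) := h0
      have hx : x i' j (kq i j).1 (kq i' j).2 = 1 := by rw [hphi]; exact hkq1 i' j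
      rw [if_pos hpi.symm, hx] at h
      exact h
    have hsub : (∑ q : Fin 3, (if pq i q = pq i (kq i j).2 then x i j (kq i j).1 q else 0))
        + (∑ q : Fin 3, (if pq i' q = pq i (kq i j).2 then x i' j (kq i j).1 q else 0))
        ≤ ∑ i'' : Fin n, ∑ q : Fin 3,
            (if pq i'' q = pq i (kq i j).2 then x i'' j (kq i j).1 q else 0) := by
      rw [← Finset.sum_pair
        (f := fun i'' => ∑ q : Fin 3,
          (if pq i'' q = pq i (kq i j).2 then x i'' j (kq i j).1 q else 0)) hne]
      exact Finset.sum_le_sum_of_subset (Finset.subset_univ _)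
    omega
  · -- (iii)
    intro j k
    rw [← h4 j k, Finset.card_filter]
    refine Finset.sum_congr rfl (fun i _ => ?_)
    show (if (kq i j).1 = k then 1 else 0) = ∑ q, x i j k q
    by_cases h : (kq i j).1 = k
    · simp [hpt, h]
    · simp [hpt, h, Ne.symm h]
  · -- fairness
    intro j hJ i i' hne hphi0 hmem0
    have hphi : (kq i j).1 = (kq i' j).1 := hphi0
    have hmem : pq i (kq i j).2 ∈ ({pq i' 0, pq i' 1, pq i' 2} : Finset (Fin m)) := hmem0
    have h := h6 j hJ ((kq i j).1) ((kq i j).2) i i' hne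
    rw [hkq1 i j, if_pos hmem] at h
    have hw : x i' j (kq i j).1 (kq i' j).2 = 1 := by rw [hphi]; exact hkq1 i' j
    have hw2 : 1 ≤ ∑ w : Fin 3, x i' j (kq i j).1 w := by
      rw [← hw]; exact Finset.single_le_sum (fun w _ => Nat.zero_le _) (Finset.mem_univ _)
    omega



lemma mem_triple_iff' {m : ℕ} (f : Fin 3 → Fin m) (a : Fin m) :
    a ∈ ({f 0, f 1, f 2} : Finset (Fin m)) ↔ ∃ j, f j = a := by
  simp only [Finset.mem_insert, Finset.mem_singleton]
  constructor
  · rintro (h | h | h)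
    exacts [⟨0, h.symm⟩, ⟨1, h.symm⟩, ⟨2, h.symm⟩]
  · rintro ⟨j, h⟩
    fin_cases j
    exacts [Or.inl h.symm, Or.inr (Or.inl h.symm), Or.inr (Or.inr h.symm)]

lemma sum_ind_one' {ι : Type*} [Fintype ι] [DecidableEq ι] (P : ι → Prop) [DecidablePred P]
    (a : ι) (h : ∀ b, P b ↔ b = a) : (∑ b, if P b then (1:ℕ) else 0) = 1 := by
  simp_rw [h]
  simp

lemma sum_ind_pair' {ι κ : Type*} [Fintype ι] [Fintype κ] [DecidableEq ι] [DecidableEq κ]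
    (P : ι → κ → Prop) [∀ a b, Decidable (P a b)] (a0 : ι) (b0 : κ)
    (h : ∀ a b, P a b ↔ a = a0 ∧ b = b0) :
    (∑ a, ∑ b, if P a b then (1:ℕ) else 0) = 1 := by
  simp_rw [h, ite_and]
  simp

lemma ilp_backward {n m s : ℕ} (size : Fin s → ℕ) (pq : Fin n → Fin 3 → Fin m)
    (hpq : ∀ i, Function.Injective (pq i)) (J : Fin 3 → Prop)
    (π : Fin 3 → Fin n → Fin m) (φ : Fin 3 → Fin n → Fin s)
    (hi : ∀ i : Fin n, ({π 0 i, π 1 i, π 2 i} : Finset (Fin m)) = {pq i 0, pq i 1, pq i 2})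
    (hii : ∀ (j : Fin 3) (i i' : Fin n), i ≠ i' → φ j i = φ j i' → π j i ≠ π j i')
    (hiii : ∀ (j : Fin 3) (k : Fin s),
        (Finset.univ.filter (fun i => φ j i = k)).card = size k)
    (hfair : ∀ j : Fin 3, J j → ∀ i i' : Fin n, i ≠ i' → φ j i = φ j i' →
        π j i ∉ ({pq i' 0, pq i' 1, pq i' 2} : Finset (Fin m))) :
    (∃ x : Fin n → Fin 3 → Fin s → Fin 3 → ℕ,
      (∀ i j k q, x i j k q = 0 ∨ x i j k q = 1) ∧
      (∀ (i : Fin n) (q : Fin 3), ∑ j : Fin 3, ∑ k : Fin s, x i j k q = 1) ∧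
      (∀ (i : Fin n) (j : Fin 3), ∑ k : Fin s, ∑ q : Fin 3, x i j k q = 1) ∧
      (∀ (j : Fin 3) (k : Fin s), ∑ i : Fin n, ∑ q : Fin 3, x i j k q = size k) ∧
      (∀ (j : Fin 3) (k : Fin s) (ℓ : Fin m),
        ∑ i : Fin n, ∑ q : Fin 3, (if pq i q = ℓ then x i j k q else 0) ≤ 1) ∧
      (∀ j : Fin 3, J j → ∀ (k : Fin s) (q : Fin 3) (i α : Fin n), i ≠ α →
        x i j k q + (∑ w : Fin 3, x α j k w) +
          (if pq i q ∈ ({pq α 0, pq α 1, pq α 2} : Finset (Fin m)) then 1 else 0) ≤ 2)) := by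
  -- the map j ↦ π j i is injective
  have hπinj : ∀ i : Fin n, Function.Injective (fun j => π j i) := by
    intro i
    have himg : Finset.image (fun j => π j i) Finset.univ
        = ({π 0 i, π 1 i, π 2 i} : Finset (Fin m)) := by
      have hu : (Finset.univ : Finset (Fin 3)) = {0, 1, 2} := by decide
      rw [hu]
      simp [Finset.image_insert]
    have hc3 : ({pq i 0, pq i 1, pq i 2} : Finset (Fin m)).card = 3 := by
      rw [Finset.card_insert_of_notMem, Finset.card_insert_of_notMem,
        Finset.card_singleton]
      · simp only [Finset.mem_singleton]
        exact fun h => absurd (hpq i h) (by decide)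
      · simp only [Finset.mem_insert, Finset.mem_singleton]
        rintro (h | h) <;> exact absurd (hpq i h) (by decide)
    have hcard : (Finset.image (fun j => π j i) Finset.univ).card
        = (Finset.univ : Finset (Fin 3)).card := by
      rw [himg, hi i, hc3]
      decide
    have := Finset.injOn_of_card_image_eq hcard
    rw [Finset.coe_univ] at this
    exact Set.injOn_univ.mp this
  -- unique q with pq i q = π j i
  have hq : ∀ (j : Fin 3) (i : Fin n), ∃! q, pq i q = π j i := by
    intro j i
    have hmem : π j i ∈ ({pq i 0, pq i 1, pq i 2} : Finset (Fin m)) := by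
      rw [← hi i]
      exact (mem_triple_iff' (fun j => π j i) (π j i)).mpr ⟨j, rfl⟩
    obtain ⟨q, hq⟩ := (mem_triple_iff' (fun q => pq i q) (π j i)).mp hmem
    exact ⟨q, hq, fun q' hq' => hpq i (hq'.trans hq.symm)⟩
  -- unique j with π j i = pq i q
  have hj : ∀ (i : Fin n) (q : Fin 3), ∃! j, π j i = pq i q := by
    intro i q
    have hmem : pq i q ∈ ({π 0 i, π 1 i, π 2 i} : Finset (Fin m)) := by
      rw [hi i]
      exact (mem_triple_iff' (fun q => pq i q) (pq i q)).mpr ⟨q, rfl⟩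
    obtain ⟨j, hjj⟩ := (mem_triple_iff' (fun j => π j i) (pq i q)).mp hmem
    exact ⟨j, hjj, fun j' hj' => hπinj i (hj'.trans hjj.symm)⟩
  choose qs hqs1 hqs2 using hq
  choose js hjs1 hjs2 using hj
  refine ⟨fun i j k q => if φ j i = k ∧ π j i = pq i q then 1 else 0,
    fun i j k q => by dsimp only; split <;> simp, ?_, ?_, ?_, ?_, ?_⟩
  · -- (2)
    intro i q
    exact sum_ind_pair' _ (js i q) (φ (js i q) i) (fun j k => by
      constructor
      · rintro ⟨h1, h2⟩
        have hjq : j = js i q := hjs2 i q j h2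
        exact ⟨hjq, by rw [← hjq]; exact h1.symm⟩
      · rintro ⟨rfl, rfl⟩
        exact ⟨rfl, hjs1 i q⟩)
  · -- (3)
    intro i j
    exact sum_ind_pair' _ (φ j i) (qs j i) (fun k q => by
      constructor
      · rintro ⟨h1, h2⟩
        exact ⟨h1.symm, hqs2 j i q h2.symm⟩
      · rintro ⟨rfl, rfl⟩
        exact ⟨rfl, (hqs1 j i).symm⟩)
  · -- (4)
    intro j k
    rw [← hiii j k, Finset.card_filter]
    refine Finset.sum_congr rfl (fun i _ => ?_)
    dsimp only
    by_cases h : φ j i = k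
    · rw [if_pos h]
      exact sum_ind_one' (fun q => φ j i = k ∧ π j i = pq i q) (qs j i) (fun q => by
        constructor
        · rintro ⟨-, h2⟩; exact hqs2 j i q h2.symm
        · rintro rfl; exact ⟨h, (hqs1 j i).symm⟩)
    · rw [if_neg h]
      exact Finset.sum_eq_zero (fun q _ =>
        if_neg (fun hc : φ j i = k ∧ π j i = pq i q => h hc.1))
  · -- (5)
    intro j k ℓ
    have hinner : ∀ i : Fin n,
        (∑ q : Fin 3, if pq i q = ℓ then (if φ j i = k ∧ π j i = pq i q then (1:ℕ) else 0) else 0)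
        = if φ j i = k ∧ π j i = ℓ then 1 else 0 := by
      intro i
      have hco : ∀ q : Fin 3, (if pq i q = ℓ
          then (if φ j i = k ∧ π j i = pq i q then (1:ℕ) else 0) else 0)
          = if pq i q = ℓ ∧ φ j i = k ∧ π j i = pq i q then 1 else 0 := by
        intro q
        by_cases hA : pq i q = ℓ <;> simp [hA]
      rw [Finset.sum_congr rfl (fun q _ => hco q)]
      by_cases h : φ j i = k ∧ π j i = ℓ
      · rw [if_pos h]
        apply sum_ind_one' _ (qs j i)
        intro q
        constructor
        · rintro ⟨hA, -, hC⟩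
          exact hqs2 j i q hC.symm
        · rintro rfl
          refine ⟨?_, h.1, (hqs1 j i).symm⟩
          rw [hqs1 j i]
          exact h.2
      · rw [if_neg h]
        refine Finset.sum_eq_zero (fun q _ => ?_)
        rw [if_neg]
        rintro ⟨hA, h1, h2⟩
        exact h ⟨h1, h2.trans hA⟩
    dsimp only
    calc (∑ i : Fin n, ∑ q : Fin 3,
          if pq i q = ℓ then (if φ j i = k ∧ π j i = pq i q then (1:ℕ) else 0) else 0)
        = ∑ i : Fin n, if φ j i = k ∧ π j i = ℓ then 1 else 0 :=
          Finset.sum_congr rfl (fun i _ => hinner i)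
      _ = (Finset.univ.filter (fun i : Fin n => φ j i = k ∧ π j i = ℓ)).card :=
          (Finset.card_filter _ _).symm
      _ ≤ 1 := by
          rw [Finset.card_le_one]
          intro a ha b hb
          simp only [Finset.mem_filter] at ha hb
          by_contra hab
          exact hii j a b hab (ha.2.1.trans hb.2.1.symm) (ha.2.2.trans hb.2.2.symm)
  · -- (6)
    intro j hJ k q i α hne
    have hsumα : (∑ w : Fin 3, if φ j α = k ∧ π j α = pq α w then (1:ℕ) else 0)
        = if φ j α = k then 1 else 0 := by
      by_cases h : φ j α = k
      · rw [if_pos h]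
        exact sum_ind_one' _ (qs j α) (fun w => by
          constructor
          · rintro ⟨-, h2⟩; exact hqs2 j α w h2.symm
          · rintro rfl; exact ⟨h, (hqs1 j α).symm⟩)
      · rw [if_neg h]
        exact Finset.sum_eq_zero (fun w _ => if_neg (fun hc => h hc.1))
    dsimp only
    rw [hsumα]
    by_cases h1 : φ j i = k ∧ π j i = pq i q
    · rw [if_pos h1]
      by_cases h2 : φ j α = k
      · rw [if_pos h2, if_neg]
        · have := hfair j hJ i α hne (h1.1.trans h2.symm)
          rw [h1.2] at this
          exact this
      · rw [if_neg h2]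
        split <;> omega
    · rw [if_neg h1]
      split <;> split <;> omega

/-- A binary vector `x` satisfying the feasibility constraints (2)–(5) together with the
fairness inequalities (6) for all rounds exists if and only if a fair schedule exists;
and such an `x` with the fairness inequalities required only for rounds 1 and 2 exists
if and only if a weakly fair schedule exists. -/
theorem ilp_fair_iff_fair_schedule
    (n m s : ℕ) (size : Fin s → ℕ) (hsize : ∀ k, size k = 3 ∨ size k = 4)
    (pq : Fin n → Fin 3 → Fin m) (hpq : ∀ i, Function.Injective (pq i)) :
    ((∃ x : Fin n → Fin 3 → Fin s → Fin 3 → ℕ,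
      (∀ i j k q, x i j k q = 0 ∨ x i j k q = 1) ∧
      (∀ (i : Fin n) (q : Fin 3), ∑ j : Fin 3, ∑ k : Fin s, x i j k q = 1) ∧
      (∀ (i : Fin n) (j : Fin 3), ∑ k : Fin s, ∑ q : Fin 3, x i j k q = 1) ∧
      (∀ (j : Fin 3) (k : Fin s), ∑ i : Fin n, ∑ q : Fin 3, x i j k q = size k) ∧
      (∀ (j : Fin 3) (k : Fin s) (ℓ : Fin m),
        ∑ i : Fin n, ∑ q : Fin 3, (if pq i q = ℓ then x i j k q else 0) ≤ 1) ∧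
      (∀ (j : Fin 3) (k : Fin s) (q : Fin 3) (i α : Fin n), i ≠ α →
        x i j k q + (∑ w : Fin 3, x α j k w) +
          (if pq i q ∈ ({pq α 0, pq α 1, pq α 2} : Finset (Fin m)) then 1 else 0) ≤ 2))
    ↔
    (∃ (π : Fin 3 → Fin n → Fin m) (φ : Fin 3 → Fin n → Fin s),
      (∀ i : Fin n, ({π 0 i, π 1 i, π 2 i} : Finset (Fin m))
        = {pq i 0, pq i 1, pq i 2}) ∧
      (∀ (j : Fin 3) (i i' : Fin n), i ≠ i' → φ j i = φ j i' → π j i ≠ π j i') ∧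
      (∀ (j : Fin 3) (k : Fin s),
        (Finset.univ.filter (fun i => φ j i = k)).card = size k) ∧
      (∀ (j : Fin 3) (i i' : Fin n), i ≠ i' → φ j i = φ j i' →
        π j i ∉ ({pq i' 0, pq i' 1, pq i' 2} : Finset (Fin m)))))
    ∧
    ((∃ x : Fin n → Fin 3 → Fin s → Fin 3 → ℕ,
      (∀ i j k q, x i j k q = 0 ∨ x i j k q = 1) ∧
      (∀ (i : Fin n) (q : Fin 3), ∑ j : Fin 3, ∑ k : Fin s, x i j k q = 1) ∧
      (∀ (i : Fin n) (j : Fin 3), ∑ k : Fin s, ∑ q : Fin 3, x i j k q = 1) ∧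
      (∀ (j : Fin 3) (k : Fin s), ∑ i : Fin n, ∑ q : Fin 3, x i j k q = size k) ∧
      (∀ (j : Fin 3) (k : Fin s) (ℓ : Fin m),
        ∑ i : Fin n, ∑ q : Fin 3, (if pq i q = ℓ then x i j k q else 0) ≤ 1) ∧
      (∀ j : Fin 3, (j = 0 ∨ j = 1) → ∀ (k : Fin s) (q : Fin 3) (i α : Fin n), i ≠ α →
        x i j k q + (∑ w : Fin 3, x α j k w) +
          (if pq i q ∈ ({pq α 0, pq α 1, pq α 2} : Finset (Fin m)) then 1 else 0) ≤ 2))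
    ↔
    (∃ (π : Fin 3 → Fin n → Fin m) (φ : Fin 3 → Fin n → Fin s),
      (∀ i : Fin n, ({π 0 i, π 1 i, π 2 i} : Finset (Fin m))
        = {pq i 0, pq i 1, pq i 2}) ∧
      (∀ (j : Fin 3) (i i' : Fin n), i ≠ i' → φ j i = φ j i' → π j i ≠ π j i') ∧
      (∀ (j : Fin 3) (k : Fin s),
        (Finset.univ.filter (fun i => φ j i = k)).card = size k) ∧
      (∀ j : Fin 3, (j = 0 ∨ j = 1) → ∀ i i' : Fin n, i ≠ i' → φ j i = φ j i' →
        π j i ∉ ({pq i' 0, pq i' 1, pq i' 2} : Finset (Fin m))))) := by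
  constructor
  · constructor
    · rintro ⟨x, hb, h2, h3, h4, h5, h6⟩
      obtain ⟨π, φ, a, b, c, d⟩ := ilp_forward size pq (fun _ => True) x hb h2 h3 h4 h5
        (fun j _ => h6 j)
      exact ⟨π, φ, a, b, c, fun j => d j trivial⟩
    · rintro ⟨π, φ, a, b, c, d⟩
      obtain ⟨x, hb, h2, h3, h4, h5, h6⟩ := ilp_backward size pq hpq (fun _ => True) π φ a b c
        (fun j _ => d j)
      exact ⟨x, hb, h2, h3, h4, h5, fun j => h6 j trivial⟩
  · constructor
    · rintro ⟨x, hb, h2, h3, h4, h5, h6⟩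
      exact ilp_forward size pq (fun j => j = 0 ∨ j = 1) x hb h2 h3 h4 h5 h6
    · rintro ⟨π, φ, a, b, c, d⟩
      exact ilp_backward size pq hpq (fun j => j = 0 ∨ j = 1) π φ a b c d
end

section
/- There exist a binary vector x = (x_{ijkq}) satisfying the feasibility constraints (2)–(5) and nonnegative reals y_{ijkℓ} (i ∈ [n], j ∈ [3], k ∈ [s], ℓ ∈ [m]) satisfying (7) y_{ijkℓ} ≥ Σ_{w∈[3]} x_{ijkw} + Σ_{(α,q)∈T(ℓ)} x_{αjkq} − 1 for all i, j, k, ℓ, and (8) Σ_{j∈[3]} Σ_{k∈[s]} y_{ijkℓ} ≤ 1 for every team i and every problem index ℓ, if and only if there exists a strongly fair schedule. -/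
lemma sum_eq_one_unique {β : Type*} [Fintype β] [DecidableEq β] (f : β → ℕ)
    (h : ∑ b, f b = 1) : ∃ b, f b = 1 ∧ ∀ b', b' ≠ b → f b' = 0 := by
  have hpos : ∃ b ∈ Finset.univ, f b ≠ 0 := by
    by_contra hc
    push_neg at hc
    have : ∑ b, f b = 0 := Finset.sum_eq_zero (fun b hb => hc b hb)
    omega
  obtain ⟨b, _, hb⟩ := hpos
  have hsplit : f b + ∑ b' ∈ Finset.univ.erase b, f b' = 1 := by
    rw [Finset.add_sum_erase _ f (Finset.mem_univ b)]; exact h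
  refine ⟨b, by omega, fun b' hb' => ?_⟩
  have h1 : ∑ b'' ∈ Finset.univ.erase b, f b'' = 0 := by omega
  exact Finset.sum_eq_zero_iff.mp h1 b' (Finset.mem_erase.mpr ⟨hb', Finset.mem_univ b'⟩)

lemma card_triple {β : Type*} [DecidableEq β] {a b c : β} (hab : a ≠ b) (hac : a ≠ c)
    (hbc : b ≠ c) : ({a, b, c} : Finset β).card = 3 := by
  rw [Finset.card_insert_of_notMem (by simp [hab, hac]),
      Finset.card_insert_of_notMem (by simp [hbc]), Finset.card_singleton]

lemma two_le_sum_nat {β : Type*} [Fintype β] [DecidableEq β] (f : β → ℕ) {a b : β}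
    (hab : a ≠ b) (ha : 1 ≤ f a) (hb : 1 ≤ f b) : 2 ≤ ∑ x, f x := by
  have h1 : f a + ∑ x ∈ Finset.univ.erase a, f x = ∑ x, f x :=
    Finset.add_sum_erase _ f (Finset.mem_univ a)
  have h2 : f b ≤ ∑ x ∈ Finset.univ.erase a, f x :=
    Finset.single_le_sum (fun _ _ => Nat.zero_le _)
      (Finset.mem_erase.mpr ⟨hab.symm, Finset.mem_univ b⟩)
  omega

lemma two_le_sum_real {β : Type*} [Fintype β] [DecidableEq β] (f : β → ℝ)
    (hf : ∀ x, 0 ≤ f x) {a b : β} (hab : a ≠ b) (ha : 1 ≤ f a) (hb : 1 ≤ f b) :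
    2 ≤ ∑ x, f x := by
  have h1 : f a + ∑ x ∈ Finset.univ.erase a, f x = ∑ x, f x :=
    Finset.add_sum_erase _ f (Finset.mem_univ a)
  have h2 : f b ≤ ∑ x ∈ Finset.univ.erase a, f x :=
    Finset.single_le_sum (fun x _ => hf x)
      (Finset.mem_erase.mpr ⟨hab.symm, Finset.mem_univ b⟩)
  linarith

lemma fwd (n m s : ℕ) (size : Fin s → ℕ)
    (pq : Fin n → Fin 3 → Fin m) (hpq : ∀ i, Function.Injective (pq i))
    (x : Fin n → Fin 3 → Fin s → Fin 3 → ℕ)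
    (y : Fin n → Fin 3 → Fin s → Fin m → ℝ)
    (h2 : ∀ (i : Fin n) (q : Fin 3), ∑ j : Fin 3, ∑ k : Fin s, x i j k q = 1)
    (h3 : ∀ (i : Fin n) (j : Fin 3), ∑ k : Fin s, ∑ q : Fin 3, x i j k q = 1)
    (h4 : ∀ (j : Fin 3) (k : Fin s), ∑ i : Fin n, ∑ q : Fin 3, x i j k q = size k)
    (h5 : ∀ (j : Fin 3) (k : Fin s) (ℓ : Fin m),
        ∑ i : Fin n, ∑ q : Fin 3, (if pq i q = ℓ then x i j k q else 0) ≤ 1)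
    (hy0 : ∀ i j k ℓ, 0 ≤ y i j k ℓ)
    (h7 : ∀ (i : Fin n) (j : Fin 3) (k : Fin s) (ℓ : Fin m),
        ((∑ w : Fin 3, x i j k w : ℕ) : ℝ) +
          ((∑ α : Fin n, ∑ q : Fin 3, (if pq α q = ℓ then x α j k q else 0) : ℕ) : ℝ)
          - 1 ≤ y i j k ℓ)
    (h8 : ∀ (i : Fin n) (ℓ : Fin m), ∑ j : Fin 3, ∑ k : Fin s, y i j k ℓ ≤ 1) :
    (∃ (π : Fin 3 → Fin n → Fin m) (φ : Fin 3 → Fin n → Fin s),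
      (∀ i : Fin n, ({π 0 i, π 1 i, π 2 i} : Finset (Fin m))
        = {pq i 0, pq i 1, pq i 2}) ∧
      (∀ (j : Fin 3) (i i' : Fin n), i ≠ i' → φ j i = φ j i' → π j i ≠ π j i') ∧
      (∀ (j : Fin 3) (k : Fin s),
        (Finset.univ.filter (fun i => φ j i = k)).card = size k) ∧
      (∀ i : Fin n,
        (((Finset.univ.filter (fun i' => φ 0 i' = φ 0 i)).image (π 0)) ∪
          ((Finset.univ.filter (fun i' => φ 1 i' = φ 1 i)).image (π 1)) ∪
          ((Finset.univ.filter (fun i' => φ 2 i' = φ 2 i)).image (π 2))).card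
          = size (φ 0 i) + size (φ 1 i) + size (φ 2 i))) := by
  -- for each (i,j) there is a unique pair (k,q) with x i j k q = 1
  have key : ∀ (i : Fin n) (j : Fin 3), ∃ p : Fin s × Fin 3,
      x i j p.1 p.2 = 1 ∧ ∀ p', p' ≠ p → x i j p'.1 p'.2 = 0 := by
    intro i j
    apply sum_eq_one_unique
    rw [Fintype.sum_prod_type]
    exact h3 i j
  choose kq hkq1 hkq0 using key
  set φ : Fin 3 → Fin n → Fin s := fun j i => (kq i j).1 with hφ
  set σ : Fin 3 → Fin n → Fin 3 := fun j i => (kq i j).2 with hσ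
  set π : Fin 3 → Fin n → Fin m := fun j i => pq i (σ j i) with hπ
  have hx : ∀ i j k q, x i j k q = if k = φ j i ∧ q = σ j i then 1 else 0 := by
    intro i j k q
    split
    · rename_i h
      obtain ⟨h1, h2⟩ := h
      subst h1; subst h2
      exact hkq1 i j
    · rename_i h
      apply hkq0 i j (k, q)
      intro hc
      exact h ⟨congrArg Prod.fst hc, congrArg Prod.snd hc⟩
  have hx1 : ∀ i j, x i j (φ j i) (σ j i) = 1 := fun i j => hkq1 i j
  -- row sums over q
  have hsumq : ∀ i j k, ∑ q, x i j k q = if k = φ j i then 1 else 0 := by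
    intro i j k
    by_cases hk : k = φ j i
    · subst hk
      simp only [hx, true_and, if_pos rfl]
      rw [Finset.sum_ite_eq' Finset.univ (σ j i) (fun _ => 1)]
      simp
    · rw [if_neg hk]
      apply Finset.sum_eq_zero
      intro q _
      rw [hx, if_neg (by tauto)]
  -- sigma is injective in j
  have hσinj : ∀ i, Function.Injective (fun j => σ j i) := by
    intro i j j' hjj'
    by_contra hne
    have t1 : 1 ≤ ∑ k, x i j k (σ j i) := by
      calc 1 = x i j (φ j i) (σ j i) := (hx1 i j).symm
        _ ≤ ∑ k, x i j k (σ j i) :=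
          Finset.single_le_sum (f := fun k => x i j k (σ j i))
            (fun k _ => Nat.zero_le _) (Finset.mem_univ (φ j i))
    have t2 : 1 ≤ ∑ k, x i j' k (σ j i) := by
      have hxx : x i j' (φ j' i) (σ j i) = 1 := by
        simp only at hjj'
        rw [hjj', hx1]
      calc 1 = x i j' (φ j' i) (σ j i) := hxx.symm
        _ ≤ ∑ k, x i j' k (σ j i) :=
          Finset.single_le_sum (f := fun k => x i j' k (σ j i))
            (fun k _ => Nat.zero_le _) (Finset.mem_univ (φ j' i))
    have := two_le_sum_nat (fun j'' => ∑ k, x i j'' k (σ j i)) hne t1 t2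
    rw [h2 i (σ j i)] at this
    omega
  -- distinctness of π over rounds
  have hπne : ∀ i (j j' : Fin 3), j ≠ j' → π j i ≠ π j' i := by
    intro i j j' hne h
    exact hne (hσinj i (hpq i h))
  -- (i)
  have goal1 : ∀ i : Fin n, ({π 0 i, π 1 i, π 2 i} : Finset (Fin m))
      = {pq i 0, pq i 1, pq i 2} := by
    intro i
    have hmem : ∀ q : Fin 3, pq i q ∈ ({pq i 0, pq i 1, pq i 2} : Finset (Fin m)) := by
      intro q
      fin_cases q <;> simp
    apply Finset.eq_of_subset_of_card_le
    · intro a ha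
      simp only [Finset.mem_insert, Finset.mem_singleton] at ha
      rcases ha with h | h | h <;> (subst h; exact hmem _)
    · have hc1 : ({π 0 i, π 1 i, π 2 i} : Finset (Fin m)).card = 3 :=
        card_triple (hπne i 0 1 (by decide)) (hπne i 0 2 (by decide))
          (hπne i 1 2 (by decide))
      have hc2 : ({pq i 0, pq i 1, pq i 2} : Finset (Fin m)).card = 3 :=
        card_triple (fun h => absurd (hpq i h) (by decide))
          (fun h => absurd (hpq i h) (by decide))
          (fun h => absurd (hpq i h) (by decide))
      rw [hc1, hc2]
  -- (ii)
  have goal2 : ∀ (j : Fin 3) (i i' : Fin n), i ≠ i' → φ j i = φ j i' →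
      π j i ≠ π j i' := by
    intro j i i' hne hφeq hπeq
    have t1 : 1 ≤ ∑ q, if pq i q = π j i then x i j (φ j i) q else 0 := by
      calc 1 = if pq i (σ j i) = π j i then x i j (φ j i) (σ j i) else 0 := by
              rw [if_pos rfl, hx1]
        _ ≤ _ := Finset.single_le_sum
              (f := fun q => if pq i q = π j i then x i j (φ j i) q else 0)
              (fun q _ => Nat.zero_le _) (Finset.mem_univ (σ j i))
    have t2 : 1 ≤ ∑ q, if pq i' q = π j i then x i' j (φ j i) q else 0 := by
      calc 1 = if pq i' (σ j i') = π j i then x i' j (φ j i) (σ j i') else 0 := by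
              rw [if_pos hπeq.symm, hφeq, hx1]
        _ ≤ _ := Finset.single_le_sum
              (f := fun q => if pq i' q = π j i then x i' j (φ j i) q else 0)
              (fun q _ => Nat.zero_le _) (Finset.mem_univ (σ j i'))
    have htwo : 2 ≤ ∑ α : Fin n, ∑ q, if pq α q = π j i then x α j (φ j i) q else 0 :=
      two_le_sum_nat
        (fun α => ∑ q, if pq α q = π j i then x α j (φ j i) q else 0) hne t1 t2
    have := h5 j (φ j i) (π j i)
    omega
  -- (iii)
  have goal3 : ∀ (j : Fin 3) (k : Fin s),
      (Finset.univ.filter (fun i => φ j i = k)).card = size k := by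
    intro j k
    rw [Finset.card_filter, ← h4 j k]
    refine Finset.sum_congr rfl (fun i _ => ?_)
    rw [hsumq i j k]
    simp [eq_comm]
  -- (iv)
  have goal4 : ∀ i : Fin n,
      (((Finset.univ.filter (fun i' => φ 0 i' = φ 0 i)).image (π 0)) ∪
        ((Finset.univ.filter (fun i' => φ 1 i' = φ 1 i)).image (π 1)) ∪
        ((Finset.univ.filter (fun i' => φ 2 i' = φ 2 i)).image (π 2))).card
        = size (φ 0 i) + size (φ 1 i) + size (φ 2 i) := by
    intro i
    set S : Fin 3 → Finset (Fin m) :=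
      fun j => (Finset.univ.filter (fun i' => φ j i' = φ j i)).image (π j) with hS
    have hcard : ∀ j, (S j).card = size (φ j i) := by
      intro j
      rw [hS]
      rw [Finset.card_image_of_injOn, goal3 j (φ j i)]
      intro a ha b hb hab
      simp only [Finset.coe_filter, Set.mem_setOf_eq, Finset.mem_univ, true_and] at ha hb
      by_contra hne
      exact goal2 j a b hne (ha.trans hb.symm) hab
    have hybig : ∀ (j : Fin 3) (ℓ : Fin m), ℓ ∈ S j → 1 ≤ y i j (φ j i) ℓ := by
      intro j ℓ hmem
      rw [hS] at hmem
      simp only [Finset.mem_image, Finset.mem_filter, Finset.mem_univ, true_and] at hmem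
      obtain ⟨α, hα1, hα2⟩ := hmem
      have e1 : ∑ w, x i j (φ j i) w = 1 := by rw [hsumq]; simp
      have e2 : 1 ≤ ∑ β : Fin n, ∑ q, if pq β q = ℓ then x β j (φ j i) q else 0 := by
        have inner : 1 ≤ ∑ q, if pq α q = ℓ then x α j (φ j i) q else 0 := by
          calc 1 = if pq α (σ j α) = ℓ then x α j (φ j i) (σ j α) else 0 := by
                rw [if_pos hα2, ← hα1, hx1]
            _ ≤ _ := Finset.single_le_sum
                (f := fun q => if pq α q = ℓ then x α j (φ j i) q else 0)
                (fun q _ => Nat.zero_le _) (Finset.mem_univ (σ j α))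
        calc 1 ≤ ∑ q, if pq α q = ℓ then x α j (φ j i) q else 0 := inner
          _ ≤ _ := Finset.single_le_sum
              (f := fun β => ∑ q, if pq β q = ℓ then x β j (φ j i) q else 0)
              (fun β _ => Nat.zero_le _) (Finset.mem_univ α)
      have h7' := h7 i j (φ j i) ℓ
      rw [e1] at h7'
      have e2' : (1 : ℝ) ≤
          ((∑ β : Fin n, ∑ q, if pq β q = ℓ then x β j (φ j i) q else 0 : ℕ) : ℝ) :=
        Nat.one_le_cast.mpr e2
      rw [Nat.cast_one] at h7'
      linarith
    have hdisj : ∀ (j j' : Fin 3), j ≠ j' → Disjoint (S j) (S j') := by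
      intro j j' hne
      rw [Finset.disjoint_left]
      intro ℓ hj hj'
      have y1 := hybig j ℓ hj
      have y2 := hybig j' ℓ hj'
      have F1 : 1 ≤ ∑ k, y i j k ℓ :=
        y1.trans (Finset.single_le_sum (f := fun k => y i j k ℓ)
          (fun k _ => hy0 i j k ℓ) (Finset.mem_univ (φ j i)))
      have F2 : 1 ≤ ∑ k, y i j' k ℓ :=
        y2.trans (Finset.single_le_sum (f := fun k => y i j' k ℓ)
          (fun k _ => hy0 i j' k ℓ) (Finset.mem_univ (φ j' i)))
      have htwo : (2:ℝ) ≤ ∑ j'' : Fin 3, ∑ k, y i j'' k ℓ := two_le_sum_real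
        (fun j'' => ∑ k, y i j'' k ℓ)
        (fun j'' => Finset.sum_nonneg (fun k _ => hy0 i j'' k ℓ)) hne F1 F2
      have := h8 i ℓ
      linarith
    show (S 0 ∪ S 1 ∪ S 2).card = _
    rw [Finset.card_union_of_disjoint (Finset.disjoint_union_left.mpr
        ⟨hdisj 0 2 (by decide), hdisj 1 2 (by decide)⟩),
      Finset.card_union_of_disjoint (hdisj 0 1 (by decide)),
      hcard 0, hcard 1, hcard 2]
  exact ⟨π, φ, goal1, goal2, goal3, goal4⟩

lemma bwd (n m s : ℕ) (size : Fin s → ℕ)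
    (pq : Fin n → Fin 3 → Fin m) (hpq : ∀ i, Function.Injective (pq i))
    (π : Fin 3 → Fin n → Fin m) (φ : Fin 3 → Fin n → Fin s)
    (g1 : ∀ i : Fin n, ({π 0 i, π 1 i, π 2 i} : Finset (Fin m))
        = {pq i 0, pq i 1, pq i 2})
    (g2 : ∀ (j : Fin 3) (i i' : Fin n), i ≠ i' → φ j i = φ j i' → π j i ≠ π j i')
    (g3 : ∀ (j : Fin 3) (k : Fin s),
        (Finset.univ.filter (fun i => φ j i = k)).card = size k)
    (g4 : ∀ i : Fin n,
        (((Finset.univ.filter (fun i' => φ 0 i' = φ 0 i)).image (π 0)) ∪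
          ((Finset.univ.filter (fun i' => φ 1 i' = φ 1 i)).image (π 1)) ∪
          ((Finset.univ.filter (fun i' => φ 2 i' = φ 2 i)).image (π 2))).card
          = size (φ 0 i) + size (φ 1 i) + size (φ 2 i)) :
    (∃ (x : Fin n → Fin 3 → Fin s → Fin 3 → ℕ)
       (y : Fin n → Fin 3 → Fin s → Fin m → ℝ),
      (∀ i j k q, x i j k q = 0 ∨ x i j k q = 1) ∧
      (∀ (i : Fin n) (q : Fin 3), ∑ j : Fin 3, ∑ k : Fin s, x i j k q = 1) ∧
      (∀ (i : Fin n) (j : Fin 3), ∑ k : Fin s, ∑ q : Fin 3, x i j k q = 1) ∧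
      (∀ (j : Fin 3) (k : Fin s), ∑ i : Fin n, ∑ q : Fin 3, x i j k q = size k) ∧
      (∀ (j : Fin 3) (k : Fin s) (ℓ : Fin m),
        ∑ i : Fin n, ∑ q : Fin 3, (if pq i q = ℓ then x i j k q else 0) ≤ 1) ∧
      (∀ i j k ℓ, 0 ≤ y i j k ℓ) ∧
      (∀ (i : Fin n) (j : Fin 3) (k : Fin s) (ℓ : Fin m),
        ((∑ w : Fin 3, x i j k w : ℕ) : ℝ) +
          ((∑ α : Fin n, ∑ q : Fin 3, (if pq α q = ℓ then x α j k q else 0) : ℕ) : ℝ)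
          - 1 ≤ y i j k ℓ) ∧
      (∀ (i : Fin n) (ℓ : Fin m), ∑ j : Fin 3, ∑ k : Fin s, y i j k ℓ ≤ 1)) := by
  classical
  -- choose σ with pq i (σ i j) = π j i
  have hex : ∀ (i : Fin n) (j : Fin 3), ∃ q, pq i q = π j i := by
    intro i j
    have hmem : π j i ∈ ({pq i 0, pq i 1, pq i 2} : Finset (Fin m)) := by
      rw [← g1 i]
      fin_cases j <;> simp
    simp only [Finset.mem_insert, Finset.mem_singleton] at hmem
    rcases hmem with h | h | h
    exacts [⟨0, h.symm⟩, ⟨1, h.symm⟩, ⟨2, h.symm⟩]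
  choose σ hσ using hex
  -- σ i is surjective, hence bijective
  have hσbij : ∀ i, Function.Bijective (σ i) := by
    intro i
    rw [Fintype.bijective_iff_surjective_and_card]
    refine ⟨?_, rfl⟩
    intro q
    have hmem : pq i q ∈ ({π 0 i, π 1 i, π 2 i} : Finset (Fin m)) := by
      rw [g1 i]
      fin_cases q <;> simp
    simp only [Finset.mem_insert, Finset.mem_singleton] at hmem
    rcases hmem with h | h | h
    · exact ⟨0, hpq i ((hσ i 0).trans h.symm)⟩
    · exact ⟨1, hpq i ((hσ i 1).trans h.symm)⟩
    · exact ⟨2, hpq i ((hσ i 2).trans h.symm)⟩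
  set x : Fin n → Fin 3 → Fin s → Fin 3 → ℕ :=
    fun i j k q => if φ j i = k ∧ σ i j = q then 1 else 0 with hxdef
  set y : Fin n → Fin 3 → Fin s → Fin m → ℝ :=
    fun i j k ℓ => if φ j i = k ∧
      ℓ ∈ (Finset.univ.filter (fun α => φ j α = k)).image (π j) then 1 else 0 with hydef
  -- sum over q
  have hsq : ∀ i j k, ∑ w, x i j k w = if φ j i = k then 1 else 0 := by
    intro i j k
    by_cases hk : φ j i = k
    · simp only [hxdef, hk, true_and]
      rw [Finset.sum_ite_eq Finset.univ (σ i j) (fun _ => 1)]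
      simp
    · simp [hxdef, hk]
  -- sum over k
  have hsk : ∀ i j q, ∑ k, x i j k q = if σ i j = q then 1 else 0 := by
    intro i j q
    by_cases hc : σ i j = q
    · simp only [hxdef, hc, and_true]
      rw [Finset.sum_ite_eq Finset.univ (φ j i) (fun _ => 1)]
      simp
    · simp [hxdef, hc]
  -- inner sum for constraint (5)
  have hinner : ∀ i j k ℓ, (∑ q, if pq i q = ℓ then x i j k q else 0)
      = if π j i = ℓ ∧ φ j i = k then 1 else 0 := by
    intro i j k ℓ
    have hterm : ∀ q, (if pq i q = ℓ then x i j k q else 0)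
        = if q = σ i j then (if pq i q = ℓ ∧ φ j i = k then 1 else 0) else 0 := by
      intro q
      by_cases h1 : q = σ i j
      · subst h1
        simp [hxdef, ite_and, and_comm]
      · have hx0 : x i j k q = 0 := by
          simp only [hxdef]
          exact if_neg (fun hc => h1 hc.2.symm)
        simp [hx0, h1]
    rw [Finset.sum_congr rfl (fun q _ => hterm q),
      Finset.sum_ite_eq' Finset.univ (σ i j)
        (fun q => if pq i q = ℓ ∧ φ j i = k then 1 else 0)]
    simp [hσ i j]
  -- the filter card bound from (ii)
  have hcard1 : ∀ (j : Fin 3) (k : Fin s) (ℓ : Fin m),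
      (Finset.univ.filter (fun i => π j i = ℓ ∧ φ j i = k)).card ≤ 1 := by
    intro j k ℓ
    rw [Finset.card_le_one]
    intro a ha b hb
    simp only [Finset.mem_filter, Finset.mem_univ, true_and] at ha hb
    by_contra hne
    exact g2 j a b hne (ha.2.trans hb.2.symm) (ha.1.trans hb.1.symm)
  have houter : ∀ (j : Fin 3) (k : Fin s) (ℓ : Fin m),
      (∑ α : Fin n, ∑ q, if pq α q = ℓ then x α j k q else 0)
        = (Finset.univ.filter (fun i => π j i = ℓ ∧ φ j i = k)).card := by
    intro j k ℓ
    rw [Finset.card_filter]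
    exact Finset.sum_congr rfl (fun α _ => hinner α j k ℓ)
  refine ⟨x, y, ?_, ?_, ?_, ?_, ?_, ?_, ?_, ?_⟩
  · intro i j k q
    simp only [hxdef]
    split <;> simp
  · -- (2)
    intro i q
    rw [Finset.sum_congr rfl (fun j _ => hsk i j q)]
    have hexu := (hσbij i).existsUnique q
    obtain ⟨j0, hj0, hun⟩ := hexu
    rw [← Finset.card_filter]
    rw [Finset.card_eq_one]
    refine ⟨j0, ?_⟩
    ext j
    simp only [Finset.mem_filter, Finset.mem_univ, true_and, Finset.mem_singleton]
    exact ⟨fun h => hun j h, fun h => h ▸ hj0⟩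
  · -- (3)
    intro i j
    have : ∀ k, ∑ q, x i j k q = if φ j i = k then 1 else 0 := fun k => hsq i j k
    rw [Finset.sum_congr rfl (fun k _ => this k)]
    rw [Finset.sum_ite_eq Finset.univ (φ j i) (fun _ => 1)]
    simp
  · -- (4)
    intro j k
    have := g3 j k
    rw [Finset.card_filter] at this
    rw [← this]
    refine Finset.sum_congr rfl (fun i _ => ?_)
    have h1 : ∑ q, x i j k q = if φ j i = k then 1 else 0 := by
      by_cases hk : φ j i = k
      · simp only [hxdef, hk, true_and]
        rw [Finset.sum_ite_eq Finset.univ (σ i j) (fun _ => 1)]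
        simp
      · simp [hxdef, hk]
    rw [h1]
  · -- (5)
    intro j k ℓ
    rw [houter j k ℓ]
    exact hcard1 j k ℓ
  · -- y nonneg
    intro i j k ℓ
    simp only [hydef]
    split <;> norm_num
  · -- (7)
    intro i j k ℓ
    rw [hsq i j k, houter j k ℓ]
    have hcR : ((Finset.univ.filter (fun i => π j i = ℓ ∧ φ j i = k)).card : ℝ) ≤ 1 := by
      exact_mod_cast hcard1 j k ℓ
    have hy0' : (0:ℝ) ≤ y i j k ℓ := by
      simp only [hydef]; split <;> norm_num
    by_cases hk : φ j i = k
    · rw [if_pos hk]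
      by_cases hcz : (Finset.univ.filter (fun i => π j i = ℓ ∧ φ j i = k)).card = 0
      · rw [hcz]
        push_cast
        linarith
      · have hne : (Finset.univ.filter (fun i => π j i = ℓ ∧ φ j i = k)).Nonempty :=
          Finset.card_pos.mp (Nat.pos_of_ne_zero hcz)
        obtain ⟨α, hα⟩ := hne
        simp only [Finset.mem_filter, Finset.mem_univ, true_and] at hα
        have hy1 : y i j k ℓ = 1 := by
          simp only [hydef]
          exact if_pos ⟨hk, Finset.mem_image.mpr
            ⟨α, Finset.mem_filter.mpr ⟨Finset.mem_univ α, hα.2⟩, hα.1⟩⟩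
        rw [hy1]
        push_cast
        linarith
    · rw [if_neg hk]
      push_cast
      linarith
  · -- (8)
    intro i ℓ
    set S : Fin 3 → Finset (Fin m) :=
      fun j => (Finset.univ.filter (fun α => φ j α = φ j i)).image (π j) with hSdef
    have hsum_k : ∀ j, ∑ k, y i j k ℓ = if ℓ ∈ S j then 1 else 0 := by
      intro j
      rw [Finset.sum_eq_single (φ j i)]
      · by_cases hm : ℓ ∈ Finset.image (π j)
            (Finset.filter (fun α => φ j α = φ j i) Finset.univ)
        · have e1 : y i j (φ j i) ℓ = 1 := by
            simp only [hydef]; exact if_pos ⟨trivial, hm⟩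
          have e2 : (if ℓ ∈ S j then (1:ℝ) else 0) = 1 := by
            simp only [hSdef]; exact if_pos hm
          rw [e1, e2]
        · have e1 : y i j (φ j i) ℓ = 0 := by
            simp only [hydef]; exact if_neg (fun hc => hm hc.2)
          have e2 : (if ℓ ∈ S j then (1:ℝ) else 0) = 0 := by
            simp only [hSdef]; exact if_neg hm
          rw [e1, e2]
      · intro k _ hk
        simp only [hydef]
        exact if_neg (fun hc => hk hc.1.symm)
      · intro h
        exact absurd (Finset.mem_univ (φ j i)) h
    rw [Finset.sum_congr rfl (fun j _ => hsum_k j)]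
    -- disjointness of the three problem sets
    have hcardS : ∀ j, (S j).card = size (φ j i) := by
      intro j
      rw [hSdef, Finset.card_image_of_injOn, g3 j (φ j i)]
      intro a ha b hb hab
      simp only [Finset.coe_filter, Set.mem_setOf_eq, Finset.mem_univ, true_and] at ha hb
      by_contra hne
      exact g2 j a b hne (ha.trans hb.symm) hab
    have hU := g4 i
    have hU' : (S 0 ∪ S 1 ∪ S 2).card = (S 0).card + (S 1).card + (S 2).card := by
      rw [hcardS 0, hcardS 1, hcardS 2]
      exact hU
    have hle1 : (S 0 ∪ S 1 ∪ S 2).card ≤ (S 0 ∪ S 1).card + (S 2).card :=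
      Finset.card_union_le _ _
    have hle2 : (S 0 ∪ S 1).card ≤ (S 0).card + (S 1).card := Finset.card_union_le _ _
    have he1 : (S 0 ∪ S 1).card = (S 0).card + (S 1).card := by omega
    have he2 : (S 0 ∪ S 1 ∪ S 2).card = (S 0 ∪ S 1).card + (S 2).card := by omega
    have d01 : Disjoint (S 0) (S 1) := Finset.card_union_eq_card_add_card.mp he1
    have d012 : Disjoint (S 0 ∪ S 1) (S 2) := Finset.card_union_eq_card_add_card.mp he2
    rw [Fin.sum_univ_three]
    by_cases h0 : ℓ ∈ S 0 <;> by_cases h1 : ℓ ∈ S 1 <;> by_cases h2 : ℓ ∈ S 2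
    · exact absurd h1 (Finset.disjoint_left.mp d01 h0)
    · exact absurd h1 (Finset.disjoint_left.mp d01 h0)
    · exact absurd h2 (Finset.disjoint_left.mp d012 (Finset.mem_union_left _ h0))
    · simp [h0, h1, h2]
    · exact absurd h2 (Finset.disjoint_left.mp d012 (Finset.mem_union_right _ h1))
    · simp [h0, h1, h2]
    · simp [h0, h1, h2]
    · simp [h0, h1, h2]

/-- A binary vector `x` satisfying the feasibility constraints (2)–(5) together with
nonnegative reals `y` satisfying (7) and (8) exists if and only if a strongly fair
schedule exists. -/
theorem ilp_strongly_fair_iff_strongly_fair_schedule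
    (n m s : ℕ) (size : Fin s → ℕ) (hsize : ∀ k, size k = 3 ∨ size k = 4)
    (pq : Fin n → Fin 3 → Fin m) (hpq : ∀ i, Function.Injective (pq i)) :
    (∃ (x : Fin n → Fin 3 → Fin s → Fin 3 → ℕ)
       (y : Fin n → Fin 3 → Fin s → Fin m → ℝ),
      (∀ i j k q, x i j k q = 0 ∨ x i j k q = 1) ∧
      (∀ (i : Fin n) (q : Fin 3), ∑ j : Fin 3, ∑ k : Fin s, x i j k q = 1) ∧
      (∀ (i : Fin n) (j : Fin 3), ∑ k : Fin s, ∑ q : Fin 3, x i j k q = 1) ∧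
      (∀ (j : Fin 3) (k : Fin s), ∑ i : Fin n, ∑ q : Fin 3, x i j k q = size k) ∧
      (∀ (j : Fin 3) (k : Fin s) (ℓ : Fin m),
        ∑ i : Fin n, ∑ q : Fin 3, (if pq i q = ℓ then x i j k q else 0) ≤ 1) ∧
      (∀ i j k ℓ, 0 ≤ y i j k ℓ) ∧
      (∀ (i : Fin n) (j : Fin 3) (k : Fin s) (ℓ : Fin m),
        ((∑ w : Fin 3, x i j k w : ℕ) : ℝ) +
          ((∑ α : Fin n, ∑ q : Fin 3, (if pq α q = ℓ then x α j k q else 0) : ℕ) : ℝ)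
          - 1 ≤ y i j k ℓ) ∧
      (∀ (i : Fin n) (ℓ : Fin m), ∑ j : Fin 3, ∑ k : Fin s, y i j k ℓ ≤ 1))
    ↔
    (∃ (π : Fin 3 → Fin n → Fin m) (φ : Fin 3 → Fin n → Fin s),
      (∀ i : Fin n, ({π 0 i, π 1 i, π 2 i} : Finset (Fin m))
        = {pq i 0, pq i 1, pq i 2}) ∧
      (∀ (j : Fin 3) (i i' : Fin n), i ≠ i' → φ j i = φ j i' → π j i ≠ π j i') ∧
      (∀ (j : Fin 3) (k : Fin s),
        (Finset.univ.filter (fun i => φ j i = k)).card = size k) ∧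
      (∀ i : Fin n,
        (((Finset.univ.filter (fun i' => φ 0 i' = φ 0 i)).image (π 0)) ∪
          ((Finset.univ.filter (fun i' => φ 1 i' = φ 1 i)).image (π 1)) ∪
          ((Finset.univ.filter (fun i' => φ 2 i' = φ 2 i)).image (π 2))).card
          = size (φ 0 i) + size (φ 1 i) + size (φ 2 i))) := by
  constructor
  · rintro ⟨x, y, -, h2, h3, h4, h5, hy0, h7, h8⟩
    exact fwd n m s size pq hpq x y h2 h3 h4 h5 hy0 h7 h8
  · rintro ⟨π, φ, g1, g2, g3, g4⟩
    exact bwd n m s size pq hpq π φ g1 g2 g3 g4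
end

section
/- Let T be a finite set of n ≥ 4 teams, each team t ∈ T having a portfolio P(t) ⊆ P with |P(t)| = 3, and suppose that every problem p ∈ P is avoided by at least one team. Then T contains a fine set: a 4-element subset S ⊆ T such that every problem p ∈ P belongs to the portfolios of at most 3 teams of S. -/
/-- If there are at least 4 teams, each with a portfolio of exactly 3 problems, and every
problem is avoided by at least one team, then there is a fine set: a 4-element set `S` of
teams such that every problem belongs to the portfolios of at most 3 teams of `S`. -/
theorem exists_fine_set
    {T P : Type*} [Fintype T] [DecidableEq T] [DecidableEq P]
    (Pf : T → Finset P) (hPf : ∀ t, (Pf t).card = 3)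
    (hn : 4 ≤ Fintype.card T)
    (havoid : ∀ p : P, ∃ t : T, p ∉ Pf t) :
    ∃ S : Finset T, S.card = 4 ∧
      ∀ p : P, (S.filter (fun t => p ∈ Pf t)).card ≤ 3 := by
  have hT : Nonempty T := Fintype.card_pos_iff.mp (by omega)
  obtain ⟨t1⟩ := hT
  choose f hf using havoid
  have hcard0 : (insert t1 ((Pf t1).image f)).card ≤ 4 := by
    calc (insert t1 ((Pf t1).image f)).card ≤ ((Pf t1).image f).card + 1 :=
          Finset.card_insert_le _ _
      _ ≤ (Pf t1).card + 1 := by gcongr; exact Finset.card_image_le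
      _ = 4 := by rw [hPf]
  obtain ⟨S, hsub, hScard⟩ := Finset.exists_superset_card_eq hcard0 hn
  refine ⟨S, hScard, fun p => ?_⟩
  by_cases hp : p ∈ Pf t1
  · have hfp : f p ∈ S := hsub (Finset.mem_insert_of_mem (Finset.mem_image_of_mem f hp))
    have hss : S.filter (fun t => p ∈ Pf t) ⊆ S.erase (f p) := by
      intro t ht
      simp only [Finset.mem_filter] at ht
      refine Finset.mem_erase.mpr ⟨?_, ht.1⟩
      rintro rfl; exact hf p ht.2
    calc (S.filter (fun t => p ∈ Pf t)).card ≤ (S.erase (f p)).card :=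
          Finset.card_le_card hss
      _ = 3 := by rw [Finset.card_erase_of_mem hfp, hScard]
  · have ht1 : t1 ∈ S := hsub (Finset.mem_insert_self _ _)
    have hss : S.filter (fun t => p ∈ Pf t) ⊆ S.erase t1 := by
      intro t ht
      simp only [Finset.mem_filter] at ht
      refine Finset.mem_erase.mpr ⟨?_, ht.1⟩
      rintro rfl; exact hp ht.2
    calc (S.filter (fun t => p ∈ Pf t)).card ≤ (S.erase t1).card :=
          Finset.card_le_card hss
      _ = 3 := by rw [Finset.card_erase_of_mem ht1, hScard]
end
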